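/- arXiv:1309.2201 — 3 statements merged into one kernel-verified Lean document; each statement's English description precedes it below -/
import Mathlib

section
/- Let G be a connected simple graph on vertices {0,...,n} with root r. For each d ≥ 0, the number of parking functions of G of degree d equals the number of spanning trees T of G rooted at r with κ(G,T) = g - d, where g = |E| - |V| + 1. -/
open Finset

namespace PFG

variable {n : ℕ}

/-- `deg_{Sᶜ}(i)`: the number of edges `{i,j}` of `G` with `j ∉ S`. -/
noncomputable def sDeg (G : SimpleGraph (Fin (n+1))) (S : Finset (Fin (n+1))) (i : Fin (n+1)) : ℕ :=
  Set.ncard {j : Fin (n+1) | G.Adj i j ∧ j ∉ S}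

/-- `P` is a parking function for `G` with respect to the root `r`:
for every nonempty `S ⊆ V \ {r}` there is `i ∈ S` with `P i < deg_{Sᶜ}(i)`. -/
def IsParkingFunction (G : SimpleGraph (Fin (n+1))) (r : Fin (n+1))
    (P : Fin (n+1) → ℕ) : Prop :=
  ∀ S : Finset (Fin (n+1)), S.Nonempty → r ∉ S → ∃ i ∈ S, P i < sDeg G S i

/-- The degree of a parking function: the sum of its values over non-root vertices. -/
def degPF (r : Fin (n+1)) (P : Fin (n+1) → ℕ) : ℕ := ∑ v ∈ univ.erase r, P v

/-- A spanning tree of `G` rooted at `r`, encoded by its parent function: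
each non-root vertex is adjacent (in `G`) to its parent, and iterating
the parent map from any vertex reaches the root. -/
structure RootedSpanningTree (G : SimpleGraph (Fin (n+1))) (r : Fin (n+1)) where
  parent : Fin (n+1) → Fin (n+1)
  parent_root : parent r = r
  adj_parent : ∀ v, v ≠ r → G.Adj (parent v) v
  reaches_root : ∀ v, ∃ k, parent^[k] v = r

/-- `i` is a (proper) ancestor of `j` in the rooted tree with parent map `par`. -/
def IsAncestor (par : Fin (n+1) → Fin (n+1)) (i j : Fin (n+1)) : Prop :=
  ∃ k, 0 < k ∧ par^[k] j = i

/-- An inversion: `i` is an ancestor of `j` and `i > j`. -/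
def IsInversion (par : Fin (n+1) → Fin (n+1)) (i j : Fin (n+1)) : Prop :=
  IsAncestor par i j ∧ j < i

/-- A κ-inversion: an inversion `(i,j)` such that moreover `i` is not the
root and the parent of `i` is adjacent to `j` in `G`. -/
def IsKappaInversion (G : SimpleGraph (Fin (n+1))) (r : Fin (n+1))
    (par : Fin (n+1) → Fin (n+1)) (i j : Fin (n+1)) : Prop :=
  IsAncestor par i j ∧ j < i ∧ i ≠ r ∧ G.Adj (par i) j

/-- the κ-number: the number of κ-inversions. -/
noncomputable def kappaNum (G : SimpleGraph (Fin (n+1))) (r : Fin (n+1))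
    (par : Fin (n+1) → Fin (n+1)) : ℕ :=
  Set.ncard {p : Fin (n+1) × Fin (n+1) | IsKappaInversion G r par p.1 p.2}

/-- the number of inversions. -/
noncomputable def invNum (par : Fin (n+1) → Fin (n+1)) : ℕ :=
  Set.ncard {p : Fin (n+1) × Fin (n+1) | IsInversion par p.1 p.2}

open Classical in
/-- The neighbors of `i` in `G`, listed in decreasing order. -/
noncomputable def nbrs (G : SimpleGraph (Fin (n+1))) (i : Fin (n+1)) : List (Fin (n+1)) :=
  ((univ.filter (fun j => G.Adj i j)).sort (· ≤ ·)).reverse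

/-- One step of depth-first search from vertex `i`: scan the neighbors of `i`
in decreasing order; each unvisited neighbor `j` is visited, gets parent `i`,
and the search recurses from `j`.  The state is the pair
(visited vertices, parent map). -/
noncomputable def dfsStep (G : SimpleGraph (Fin (n+1))) :
    ℕ → Fin (n+1) → Finset (Fin (n+1)) × (Fin (n+1) → Fin (n+1)) →
      Finset (Fin (n+1)) × (Fin (n+1) → Fin (n+1))
  | 0, _, st => st
  | (fuel+1), i, st =>
      (nbrs G i).foldl
        (fun st j =>
          if j ∈ st.1 then st
          else dfsStep G fuel j (insert j st.1, Function.update st.2 j i)) st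

/-- The parent map of the depth-first search tree of `G` rooted at `r`,
visiting neighbors in decreasing numerical order. -/
noncomputable def dfsParent (G : SimpleGraph (Fin (n+1))) (r : Fin (n+1)) :
    Fin (n+1) → Fin (n+1) :=
  (dfsStep G (n+1) r ({r}, fun _ => r)).2

/-- The set of edges of the rooted tree given by parent map `par`. -/
def treeEdges (r : Fin (n+1)) (par : Fin (n+1) → Fin (n+1)) : Set (Sym2 (Fin (n+1))) :=
  {e | ∃ v, v ≠ r ∧ e = s(par v, v)}

end PFG
namespace PFGProof
open PFG

variable {n : ℕ}

/-- State of the DFS-burning machine. -/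
structure St (n : ℕ) where
  stack : List (Fin (n+1))
  todo : Fin (n+1) → List (Fin (n+1))
  cnt : Fin (n+1) → ℕ
  par : Fin (n+1) → Fin (n+1)
  burnt : Finset (Fin (n+1))

open Classical in
/-- One step of the machine, parameterized by the burning rule `B i j c`
(scanner `i`, target `j`, current count `c`). -/
noncomputable def step (B : Fin (n+1) → Fin (n+1) → ℕ → Prop) (s : St n) : St n :=
  match s.stack with
  | [] => s
  | i :: rest =>
    match s.todo i with
    | [] => { s with stack := rest }
    | j :: js =>
      if j ∈ s.burnt then { s with todo := Function.update s.todo i js }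
      else if B i j (s.cnt j) then
        { s with
                 todo := Function.update s.todo i js
                 stack := j :: i :: rest
                 burnt := insert j s.burnt
                 par := Function.update s.par j i }
      else { s with
                    todo := Function.update s.todo i js
                    cnt := Function.update s.cnt j (s.cnt j + 1) }

variable {B : Fin (n+1) → Fin (n+1) → ℕ → Prop} {s : St n}

lemma step_nil (h : s.stack = []) : step B s = s := by
  obtain ⟨st, td, c, p, b⟩ := s
  subst h; rfl

lemma step_pop {i rest} (h : s.stack = i :: rest) (h2 : s.todo i = []) :
    step B s = { s with stack := rest } := by
  obtain ⟨st, td, c, p, b⟩ := s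
  dsimp at h h2
  subst h; simp [step, h2]

open Classical in
lemma step_skip {i rest j js} (h : s.stack = i :: rest) (h2 : s.todo i = j :: js)
    (hb : j ∈ s.burnt) :
    step B s = { s with todo := Function.update s.todo i js } := by
  obtain ⟨st, td, c, p, b⟩ := s
  dsimp at h h2
  subst h; simp [step, h2, hb]

open Classical in
lemma step_burn {i rest j js} (h : s.stack = i :: rest) (h2 : s.todo i = j :: js)
    (hb : j ∉ s.burnt) (hr : B i j (s.cnt j)) :
    step B s = { s with
                 todo := Function.update s.todo i js
                 stack := j :: i :: rest
                 burnt := insert j s.burnt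
                 par := Function.update s.par j i } := by
  obtain ⟨st, td, c, p, b⟩ := s
  dsimp at h h2 hb hr
  subst h; simp [step, h2, hb, hr]

open Classical in
lemma step_cnt {i rest j js} (h : s.stack = i :: rest) (h2 : s.todo i = j :: js)
    (hb : j ∉ s.burnt) (hr : ¬ B i j (s.cnt j)) :
    step B s = { s with
                    todo := Function.update s.todo i js
                    cnt := Function.update s.cnt j (s.cnt j + 1) } := by
  obtain ⟨st, td, c, p, b⟩ := s
  dsimp at h h2 hb hr
  subst h; simp [step, h2, hb, hr]

/-- Case analysis principle for a step. -/
lemma step_cases (B : Fin (n+1) → Fin (n+1) → ℕ → Prop) (s : St n)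
    (motive : Prop)
    (hnil : s.stack = [] → step B s = s → motive)
    (hpop : ∀ i rest, s.stack = i :: rest → s.todo i = [] →
      step B s = { s with stack := rest } → motive)
    (hskip : ∀ i rest j js, s.stack = i :: rest → s.todo i = j :: js → j ∈ s.burnt →
      step B s = { s with todo := Function.update s.todo i js } → motive)
    (hburn : ∀ i rest j js, s.stack = i :: rest → s.todo i = j :: js → j ∉ s.burnt →
      B i j (s.cnt j) →
      step B s = { s with
                 todo := Function.update s.todo i js
                 stack := j :: i :: rest
                 burnt := insert j s.burnt
                 par := Function.update s.par j i } → motive)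
    (hcnt : ∀ i rest j js, s.stack = i :: rest → s.todo i = j :: js → j ∉ s.burnt →
      ¬ B i j (s.cnt j) →
      step B s = { s with
                    todo := Function.update s.todo i js
                    cnt := Function.update s.cnt j (s.cnt j + 1) } → motive) :
    motive := by
  classical
  rcases hst : s.stack with _ | ⟨i, rest⟩
  · exact hnil hst (step_nil hst)
  rcases htd : s.todo i with _ | ⟨j, js⟩
  · exact hpop i rest hst htd (step_pop hst htd)
  by_cases hb : j ∈ s.burnt
  · exact hskip i rest j js hst htd hb (step_skip hst htd hb)
  by_cases hr : B i j (s.cnt j)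
  · exact hburn i rest j js hst htd hb hr (step_burn hst htd hb hr)
  · exact hcnt i rest j js hst htd hb hr (step_cnt hst htd hb hr)

end PFGProof
namespace PFGProof
open PFG

variable {n : ℕ}

lemma mem_nbrs {G : SimpleGraph (Fin (n+1))} {x y : Fin (n+1)} :
    y ∈ nbrs G x ↔ G.Adj x y := by
  classical
  simp [nbrs]

lemma nbrs_pairwise {G : SimpleGraph (Fin (n+1))} (x : Fin (n+1)) :
    (nbrs G x).Pairwise (· > ·) := by
  classical
  rw [nbrs, List.pairwise_reverse]
  exact (Finset.sortedLT_sort _).pairwise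

lemma nbrs_nodup {G : SimpleGraph (Fin (n+1))} (x : Fin (n+1)) :
    (nbrs G x).Nodup := by
  classical
  rw [nbrs, List.nodup_reverse]
  exact Finset.sort_nodup _ _

/-- If `z` has already been scanned (removed from the todo-suffix) while `y` has not,
then `z > y`. -/
lemma gt_of_scanned {G : SimpleGraph (Fin (n+1))} {x y z : Fin (n+1)} {td : List (Fin (n+1))}
    (hsuf : td <:+ nbrs G x) (hy : y ∈ td) (hz : z ∈ nbrs G x) (hzn : z ∉ td) :
    z > y := by
  obtain ⟨l₁, hl⟩ := hsuf
  have hp := nbrs_pairwise (G := G) x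
  rw [← hl] at hp hz
  rcases List.mem_append.mp hz with hz1 | hz2
  · exact (List.pairwise_append.mp hp).2.2 z hz1 y hy
  · exact absurd hz2 hzn

variable (G : SimpleGraph (Fin (n+1))) (r : Fin (n+1))

/-- Initial state: only the root is burnt, it is on the stack. -/
noncomputable def init : St n :=
  ⟨[r], fun v => nbrs G v, fun _ => 0, fun _ => r, {r}⟩

variable (B : Fin (n+1) → Fin (n+1) → ℕ → Prop)

/-- The run of the machine. -/
noncomputable def runS (k : ℕ) : St n := (step B)^[k] (init G r)

lemma runS_zero : runS G r B 0 = init G r := rfl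

lemma runS_succ (k : ℕ) : runS G r B (k+1) = step B (runS G r B k) :=
  Function.iterate_succ_apply' _ _ _

/-- The single-state invariant of the machine. -/
structure Inv (s : St n) : Prop where
  chain : s.stack.IsChain (fun a b => s.par a = b)
  stack_burnt : ∀ v ∈ s.stack, v ∈ s.burnt
  nodup : s.stack.Nodup
  todo_suffix : ∀ v, s.todo v <:+ nbrs G v
  unburnt_todo : ∀ v, v ∉ s.burnt → s.todo v = nbrs G v
  popped_todo : ∀ v ∈ s.burnt, v ∉ s.stack → s.todo v = []
  root_burnt : r ∈ s.burnt
  par_root : s.par r = r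
  burnt_adj : ∀ v ∈ s.burnt, v ≠ r → G.Adj (s.par v) v ∧ s.par v ∈ s.burnt
  unburnt_par : ∀ v, v ∉ s.burnt → s.par v = r
  cnt_root : s.cnt r = 0

lemma inv_init : Inv G r (init G r : St n) := by
  refine ⟨?_, ?_, ?_, ?_, ?_, ?_, ?_, ?_, ?_, ?_, ?_⟩ <;>
    simp [init]

/-- Auxiliary: congruence for parent-chains. -/
lemma chain_congr {f g : Fin (n+1) → Fin (n+1)} :
    ∀ (l : List (Fin (n+1))), (∀ a ∈ l, f a = g a) →
      l.IsChain (fun a b => f a = b) → l.IsChain (fun a b => g a = b)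
  | [], _, _ => List.isChain_nil
  | [a], _, _ => by simp
  | (a :: b :: l), h, hc => by
      rw [List.isChain_cons_cons] at hc ⊢
      exact ⟨(h a (by simp)) ▸ hc.1,
        chain_congr (b :: l) (fun x hx => h x (List.mem_cons_of_mem _ hx)) hc.2⟩

lemma inv_step {s : St n} (hs : Inv G r s) : Inv G r (step B s) := by
  classical
  refine step_cases B s _ ?_ ?_ ?_ ?_ ?_
  · rintro _ he; rw [he]; exact hs
  · -- pop
    rintro i rest hst htd he; rw [he]
    have hir : ∀ v ∈ rest, v ∈ s.stack := fun v hv => hst ▸ List.mem_cons_of_mem _ hv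
    refine ⟨?_, fun v hv => hs.stack_burnt v (hir v hv), ?_, hs.todo_suffix, hs.unburnt_todo,
      ?_, hs.root_burnt, hs.par_root, hs.burnt_adj, hs.unburnt_par, hs.cnt_root⟩
    · have := hs.chain; rw [hst] at this; exact this.tail
    · have := hs.nodup; rw [hst] at this; exact (List.nodup_cons.mp this).2
    · intro v hv hvn
      by_cases hvi : v = i
      · subst hvi; exact htd
      · refine hs.popped_todo v hv ?_
        rw [hst]
        simp only [List.mem_cons, not_or]
        exact ⟨hvi, hvn⟩
  · -- skip
    rintro i rest j js hst htd hb he; rw [he]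
    have hib : i ∈ s.burnt := hs.stack_burnt i (by rw [hst]; exact List.mem_cons_self)
    refine ⟨hs.chain, hs.stack_burnt, hs.nodup, ?_, ?_, ?_, hs.root_burnt,
      hs.par_root, hs.burnt_adj, hs.unburnt_par, hs.cnt_root⟩
    · intro v
      by_cases hvi : v = i
      · rw [hvi]; simp only [Function.update_self]
        exact (List.suffix_cons j js).trans (htd ▸ hs.todo_suffix i)
      · simp only [Function.update_of_ne hvi]; exact hs.todo_suffix v
    · intro v hv
      have hvi : v ≠ i := fun h => hv (h ▸ hib)
      simp only [Function.update_of_ne hvi]; exact hs.unburnt_todo v hv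
    · intro v hv hvn
      have hvi : v ≠ i := fun h => hvn (by rw [h, hst]; exact List.mem_cons_self)
      simp only [Function.update_of_ne hvi]; exact hs.popped_todo v hv hvn
  · -- burn
    rintro i rest j js hst htd hb hr he; rw [he]
    have hib : i ∈ s.burnt := hs.stack_burnt i (by rw [hst]; exact List.mem_cons_self)
    have hji : j ≠ i := fun h => hb (h ▸ hib)
    have hjr : j ≠ r := fun h => hb (h ▸ hs.root_burnt)
    have hjnst : j ∉ s.stack := fun h => hb (hs.stack_burnt j h)
    have hadj : G.Adj i j := mem_nbrs.mp ((hs.todo_suffix i).subset (htd ▸ List.mem_cons_self))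
    constructor
    · -- chain
      show (j :: i :: rest).IsChain _
      rw [List.isChain_cons_cons]
      constructor
      · simp
      · have hc := hs.chain; rw [hst] at hc
        refine chain_congr _ ?_ hc
        intro a ha
        have : a ≠ j := fun h => hjnst (h ▸ hst ▸ ha)
        simp [Function.update_of_ne this]
    · intro v hv
      rcases List.mem_cons.mp hv with h1 | h2
      · simp [h1]
      · exact Finset.mem_insert_of_mem (hs.stack_burnt v (hst ▸ h2))
    · show (j :: i :: rest).Nodup
      rw [List.nodup_cons]
      exact ⟨fun h => hjnst (hst ▸ h), hst ▸ hs.nodup⟩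
    · intro v
      by_cases hvi : v = i
      · rw [hvi]; simp only [Function.update_self]
        exact (List.suffix_cons j js).trans (htd ▸ hs.todo_suffix i)
      · simp only [Function.update_of_ne hvi]; exact hs.todo_suffix v
    · intro v hv
      have hv' : v ∉ s.burnt := fun h => hv (Finset.mem_insert_of_mem h)
      have hvi : v ≠ i := fun h => hv' (h ▸ hib)
      simp only [Function.update_of_ne hvi]; exact hs.unburnt_todo v hv'
    · intro v hv hvn
      simp only [List.mem_cons, not_or] at hvn
      obtain ⟨hvj, hvi, hvrest⟩ := hvn
      have hv' : v ∈ s.burnt := by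
        rcases Finset.mem_insert.mp hv with h | h
        · exact absurd h hvj
        · exact h
      simp only [Function.update_of_ne hvi]
      exact hs.popped_todo v hv' (by rw [hst]; simp [hvi, hvrest])
    · exact Finset.mem_insert_of_mem hs.root_burnt
    · show Function.update s.par j i r = r
      rw [Function.update_of_ne (Ne.symm hjr)]; exact hs.par_root
    · intro v hv hvr
      rcases Finset.mem_insert.mp hv with h | h
      · subst h
        simp only [Function.update_self]
        exact ⟨hadj, Finset.mem_insert_of_mem hib⟩
      · have hvj : v ≠ j := fun hh => hb (hh ▸ h)
        simp only [Function.update_of_ne hvj]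
        obtain ⟨h1, h2⟩ := hs.burnt_adj v h hvr
        exact ⟨h1, Finset.mem_insert_of_mem h2⟩
    · intro v hv
      have hv' : v ∉ s.burnt := fun h => hv (Finset.mem_insert_of_mem h)
      have hvj : v ≠ j := fun h => hv (h ▸ Finset.mem_insert_self _ _)
      simp only [Function.update_of_ne hvj]
      exact hs.unburnt_par v hv'
    · exact hs.cnt_root
  · -- cnt
    rintro i rest j js hst htd hb hr he; rw [he]
    have hib : i ∈ s.burnt := hs.stack_burnt i (by rw [hst]; exact List.mem_cons_self)
    have hjr : j ≠ r := fun h => hb (h ▸ hs.root_burnt)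
    refine ⟨hs.chain, hs.stack_burnt, hs.nodup, ?_, ?_, ?_, hs.root_burnt,
      hs.par_root, hs.burnt_adj, hs.unburnt_par, ?_⟩
    · intro v
      by_cases hvi : v = i
      · rw [hvi]; simp only [Function.update_self]
        exact (List.suffix_cons j js).trans (htd ▸ hs.todo_suffix i)
      · simp only [Function.update_of_ne hvi]; exact hs.todo_suffix v
    · intro v hv
      have hvi : v ≠ i := fun h => hv (h ▸ hib)
      simp only [Function.update_of_ne hvi]; exact hs.unburnt_todo v hv
    · intro v hv hvn
      have hvi : v ≠ i := fun h => hvn (by rw [h, hst]; exact List.mem_cons_self)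
      simp only [Function.update_of_ne hvi]; exact hs.popped_todo v hv hvn
    · show Function.update s.cnt j _ r = 0
      rw [Function.update_of_ne (Ne.symm hjr)]; exact hs.cnt_root

lemma inv_run (k : ℕ) : Inv G r (runS G r B k) := by
  induction k with
  | zero => exact inv_init G r
  | succ k ih => rw [runS_succ]; exact inv_step G r B ih

end PFGProof
namespace PFGProof
open PFG

section StepLemmas
variable {n : ℕ} {B : Fin (n+1) → Fin (n+1) → ℕ → Prop} {s : St n}

lemma step_burnt_mono : s.burnt ⊆ (step B s).burnt := by
  refine step_cases B s _ ?_ ?_ ?_ ?_ ?_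
  · intro _ he; rw [he]
  · intro i rest _ _ he; rw [he]
  · intro i rest j js _ _ _ he; rw [he]
  · intro i rest j js _ _ _ _ he; rw [he]; exact Finset.subset_insert _ _
  · intro i rest j js _ _ _ _ he; rw [he]

lemma step_todo_suffix (v : Fin (n+1)) : (step B s).todo v <:+ s.todo v := by
  have key : ∀ (i : Fin (n+1)) j js, s.todo i = j :: js →
      Function.update s.todo i js v <:+ s.todo v := by
    intro i j js htd
    by_cases hvi : v = i
    · rw [hvi]; simp only [Function.update_self]; rw [htd]; exact List.suffix_cons _ _
    · rw [Function.update_of_ne hvi]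
  refine step_cases B s _ ?_ ?_ ?_ ?_ ?_
  · intro _ he; rw [he]
  · intro i rest _ _ he; rw [he]
  · intro i rest j js _ htd _ he; rw [he]; exact key i j js htd
  · intro i rest j js _ htd _ _ he; rw [he]; exact key i j js htd
  · intro i rest j js _ htd _ _ he; rw [he]; exact key i j js htd

lemma step_par_frozen (v : Fin (n+1)) (hv : v ∈ s.burnt) : (step B s).par v = s.par v := by
  refine step_cases B s _ ?_ ?_ ?_ ?_ ?_
  · intro _ he; exact (congrArg (fun t => St.par t v) he).trans rfl
  · intro i rest _ _ he; exact (congrArg (fun t => St.par t v) he).trans rfl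
  · intro i rest j js _ _ _ he; exact (congrArg (fun t => St.par t v) he).trans rfl
  · intro i rest j js _ _ hb _ he; rw [he]
    show Function.update s.par j i v = s.par v
    exact Function.update_of_ne (fun h => hb (by rwa [← h])) _ _
  · intro i rest j js _ _ _ _ he; exact (congrArg (fun t => St.par t v) he).trans rfl

lemma step_cnt_frozen (v : Fin (n+1)) (hv : v ∈ s.burnt) : (step B s).cnt v = s.cnt v := by
  refine step_cases B s _ ?_ ?_ ?_ ?_ ?_
  · intro _ he; exact (congrArg (fun t => St.cnt t v) he).trans rfl
  · intro i rest _ _ he; exact (congrArg (fun t => St.cnt t v) he).trans rfl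
  · intro i rest j js _ _ _ he; exact (congrArg (fun t => St.cnt t v) he).trans rfl
  · intro i rest j js _ _ _ _ he; exact (congrArg (fun t => St.cnt t v) he).trans rfl
  · intro i rest j js _ _ hb _ he; rw [he]
    show Function.update s.cnt j (s.cnt j + 1) v = s.cnt v
    exact Function.update_of_ne (fun h => hb (by rwa [← h])) _ _

lemma step_cnt_mono (v : Fin (n+1)) : s.cnt v ≤ (step B s).cnt v := by
  refine step_cases B s _ ?_ ?_ ?_ ?_ ?_
  · intro _ he; rw [he]
  · intro i rest _ _ he; rw [he]
  · intro i rest j js _ _ _ he; rw [he]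
  · intro i rest j js _ _ _ _ he; rw [he]
  · intro i rest j js _ _ _ _ he; rw [he]
    show _ ≤ Function.update s.cnt j (s.cnt j + 1) v
    by_cases hvj : v = j
    · rw [hvj]; simp
    · rw [Function.update_of_ne hvj]

lemma step_done (v : Fin (n+1)) (hv : v ∈ s.burnt) (hvs : v ∉ s.stack) :
    v ∈ (step B s).burnt ∧ v ∉ (step B s).stack := by
  refine step_cases B s _ ?_ ?_ ?_ ?_ ?_
  · intro _ he; rw [he]; exact ⟨hv, hvs⟩
  · intro i rest hst _ he; rw [he]
    exact ⟨hv, fun h => hvs (by rw [hst]; exact List.mem_cons_of_mem _ h)⟩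
  · intro i rest j js _ _ _ he; rw [he]; exact ⟨hv, hvs⟩
  · intro i rest j js hst _ hb _ he; rw [he]
    refine ⟨Finset.mem_insert_of_mem hv, ?_⟩
    show v ∉ j :: i :: rest
    have hvj : v ≠ j := fun h => hb (by rwa [← h])
    have h2 : v ∉ i :: rest := hst ▸ hvs
    simp only [List.mem_cons, not_or] at h2 ⊢
    exact ⟨hvj, h2.1, h2.2⟩
  · intro i rest j js _ _ _ _ he; rw [he]; exact ⟨hv, hvs⟩

lemma step_burnt_insert : ∃ j, (step B s).burnt ⊆ insert j s.burnt := by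
  refine step_cases B s _ ?_ ?_ ?_ ?_ ?_
  · intro _ he; rw [he]; exact ⟨s.stack.headI, Finset.subset_insert _ _⟩
  · intro i rest _ _ he; rw [he]; exact ⟨i, Finset.subset_insert _ _⟩
  · intro i rest j js _ _ _ he; rw [he]; exact ⟨j, Finset.subset_insert _ _⟩
  · intro i rest j js _ _ _ _ he; rw [he]; exact ⟨j, subset_rfl⟩
  · intro i rest j js _ _ _ _ he; rw [he]; exact ⟨j, Finset.subset_insert _ _⟩

end StepLemmas

section RunLemmas
variable {n : ℕ} (G : SimpleGraph (Fin (n+1))) (r : Fin (n+1))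
  (B : Fin (n+1) → Fin (n+1) → ℕ → Prop)

lemma burnt_mono {k m : ℕ} (h : k ≤ m) : (runS G r B k).burnt ⊆ (runS G r B m).burnt := by
  induction m with
  | zero => cases Nat.le_zero.mp h; exact subset_rfl
  | succ m ih =>
    rcases Nat.lt_or_ge k (m+1) with h' | h'
    · rw [runS_succ]; exact (ih (Nat.lt_succ_iff.mp h')).trans step_burnt_mono
    · cases Nat.le_antisymm h h'; exact subset_rfl

lemma todo_mono {k m : ℕ} (h : k ≤ m) (v : Fin (n+1)) :
    (runS G r B m).todo v <:+ (runS G r B k).todo v := by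
  induction m with
  | zero => cases Nat.le_zero.mp h; exact List.suffix_refl _
  | succ m ih =>
    rcases Nat.lt_or_ge k (m+1) with h' | h'
    · rw [runS_succ]; exact (step_todo_suffix v).trans (ih (Nat.lt_succ_iff.mp h'))
    · cases Nat.le_antisymm h h'; exact List.suffix_refl _

lemma par_frozen {k m : ℕ} (h : k ≤ m) (v : Fin (n+1)) (hv : v ∈ (runS G r B k).burnt) :
    (runS G r B m).par v = (runS G r B k).par v := by
  induction m with
  | zero => cases Nat.le_zero.mp h; rfl
  | succ m ih =>
    rcases Nat.lt_or_ge k (m+1) with h' | h'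
    · have h'' := Nat.lt_succ_iff.mp h'
      rw [runS_succ, step_par_frozen v (burnt_mono G r B h'' hv)]
      exact ih h''
    · cases Nat.le_antisymm h h'; rfl

lemma cnt_frozen {k m : ℕ} (h : k ≤ m) (v : Fin (n+1)) (hv : v ∈ (runS G r B k).burnt) :
    (runS G r B m).cnt v = (runS G r B k).cnt v := by
  induction m with
  | zero => cases Nat.le_zero.mp h; rfl
  | succ m ih =>
    rcases Nat.lt_or_ge k (m+1) with h' | h'
    · have h'' := Nat.lt_succ_iff.mp h'
      rw [runS_succ, step_cnt_frozen v (burnt_mono G r B h'' hv)]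
      exact ih h''
    · cases Nat.le_antisymm h h'; rfl

lemma cnt_mono {k m : ℕ} (h : k ≤ m) (v : Fin (n+1)) :
    (runS G r B k).cnt v ≤ (runS G r B m).cnt v := by
  induction m with
  | zero => cases Nat.le_zero.mp h; exact le_rfl
  | succ m ih =>
    rcases Nat.lt_or_ge k (m+1) with h' | h'
    · rw [runS_succ]; exact (ih (Nat.lt_succ_iff.mp h')).trans (step_cnt_mono v)
    · cases Nat.le_antisymm h h'; exact le_rfl

lemma done_mono {k m : ℕ} (h : k ≤ m) (v : Fin (n+1))
    (hv : v ∈ (runS G r B k).burnt) (hvs : v ∉ (runS G r B k).stack) :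
    v ∈ (runS G r B m).burnt ∧ v ∉ (runS G r B m).stack := by
  induction m with
  | zero => cases Nat.le_zero.mp h; exact ⟨hv, hvs⟩
  | succ m ih =>
    rcases Nat.lt_or_ge k (m+1) with h' | h'
    · have h'' := Nat.lt_succ_iff.mp h'
      obtain ⟨h1, h2⟩ := ih h''
      rw [runS_succ]; exact step_done v h1 h2
    · cases Nat.le_antisymm h h'; exact ⟨hv, hvs⟩

lemma stack_of_burnt {k m : ℕ} (h : k ≤ m) (v : Fin (n+1))
    (hv : v ∈ (runS G r B k).burnt) (hvs : v ∈ (runS G r B m).stack) :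
    v ∈ (runS G r B k).stack := by
  by_contra hc
  exact (done_mono G r B h v hv hc).2 hvs

/-- `v` is burnt at time `k`. -/
def Bn (k : ℕ) (v : Fin (n+1)) : Prop := v ∈ (runS G r B k).burnt

/-- `x` has already scanned `y` by time `k`. -/
def Sc (k : ℕ) (x y : Fin (n+1)) : Prop :=
  y ∈ nbrs G x ∧ y ∉ (runS G r B k).todo x

lemma Bn_mono {k m : ℕ} (h : k ≤ m) {v} (hv : Bn G r B k v) : Bn G r B m v :=
  burnt_mono G r B h hv

lemma Sc_mono {k m : ℕ} (h : k ≤ m) {x y} (hv : Sc G r B k x y) : Sc G r B m x y :=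
  ⟨hv.1, fun hc => hv.2 ((todo_mono G r B h x).subset hc)⟩

lemma not_Sc_zero (x y : Fin (n+1)) : ¬ Sc G r B 0 x y := by
  rintro ⟨h1, h2⟩
  exact h2 h1

/-- The scan of `y` by `x` happens at step `k`. -/
def ScanStep (k : ℕ) (x y : Fin (n+1)) : Prop :=
  ¬ Sc G r B k x y ∧ Sc G r B (k+1) x y

lemma scanStep_unique {k m x y} (h1 : ScanStep G r B k x y) (h2 : ScanStep G r B m x y) :
    k = m := by
  rcases Nat.lt_trichotomy k m with h | h | h
  · exact absurd (Sc_mono G r B h h1.2) h2.1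
  · exact h
  · exact absurd (Sc_mono G r B h h2.2) h1.1

lemma exists_scanStep {m x y} (h : Sc G r B m x y) : ∃ k < m, ScanStep G r B k x y := by
  induction m with
  | zero => exact absurd h (not_Sc_zero G r B x y)
  | succ m ih =>
    by_cases h' : Sc G r B m x y
    · obtain ⟨k, hk, hs⟩ := ih h'
      exact ⟨k, hk.trans (Nat.lt_succ_self m), hs⟩
    · exact ⟨m, Nat.lt_succ_self m, h', h⟩

lemma scanStep_spec {k x y} (h : ScanStep G r B k x y) :
    ∃ rest js, (runS G r B k).stack = x :: rest ∧ (runS G r B k).todo x = y :: js := by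
  have hy : y ∈ (runS G r B k).todo x := by
    by_contra hc
    exact h.1 ⟨h.2.1, hc⟩
  have hy' : y ∉ (runS G r B (k+1)).todo x := h.2.2
  rw [runS_succ] at hy'
  have key : ∀ (i : Fin (n+1)) rest j js, (runS G r B k).stack = i :: rest →
      (runS G r B k).todo i = j :: js →
      y ∉ Function.update (runS G r B k).todo i js x →
      ∃ rest js, (runS G r B k).stack = x :: rest ∧ (runS G r B k).todo x = y :: js := by
    intro i rest j js hst htd hy'
    have hxi : x = i := by
      by_contra hc
      rw [Function.update_of_ne hc] at hy'
      exact hy' hy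
    subst hxi
    rw [Function.update_self] at hy'
    rw [htd] at hy
    rcases List.mem_cons.mp hy with h1 | h2
    · exact ⟨rest, js, hst, by rw [htd, h1]⟩
    · exact absurd h2 hy'
  revert hy'
  refine step_cases B (runS G r B k) _ ?_ ?_ ?_ ?_ ?_
  · intro _ he; rw [he]; intro hy'; exact absurd hy hy'
  · intro i rest _ htd he; rw [he]; intro hy'; exact absurd hy hy'
  · intro i rest j js hst htd _ he; rw [he]; exact key i rest j js hst htd
  · intro i rest j js hst htd _ _ he; rw [he]; exact key i rest j js hst htd
  · intro i rest j js hst htd _ _ he; rw [he]; exact key i rest j js hst htd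

/-- `j` is burnt at step `k`. -/
def BurnStep (k : ℕ) (j : Fin (n+1)) : Prop :=
  ¬ Bn G r B k j ∧ Bn G r B (k+1) j

lemma burnStep_unique_step {k j j'} (h1 : BurnStep G r B k j) (h2 : BurnStep G r B k j') :
    j = j' := by
  obtain ⟨w, hw⟩ := step_burnt_insert (B := B) (s := runS G r B k)
  have e1 : j = w := by
    have hh := h1.2
    rw [BurnStep] at h1
    rw [Bn, runS_succ] at hh
    rcases Finset.mem_insert.mp (hw hh) with h | h
    · exact h
    · exact absurd h h1.1
  have e2 : j' = w := by
    have hh := h2.2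
    rw [Bn, runS_succ] at hh
    rcases Finset.mem_insert.mp (hw hh) with h | h
    · exact h
    · exact absurd h h2.1
  rw [e1, e2]

lemma burnStep_unique {k m j} (h1 : BurnStep G r B k j) (h2 : BurnStep G r B m j) : k = m := by
  rcases Nat.lt_trichotomy k m with h | h | h
  · exact absurd (Bn_mono G r B h h1.2) h2.1
  · exact h
  · exact absurd (Bn_mono G r B h h2.2) h1.1

lemma burnStep_spec {k j} (h : BurnStep G r B k j) :
    ∃ x rest js, (runS G r B k).stack = x :: rest ∧ (runS G r B k).todo x = j :: js ∧
      B x j ((runS G r B k).cnt j) ∧ x ∈ (runS G r B k).burnt ∧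
      (runS G r B (k+1)).par j = x ∧ (runS G r B (k+1)).stack = j :: x :: rest ∧
      ScanStep G r B k x j := by
  obtain ⟨hnb, hb⟩ := h
  rw [Bn, runS_succ] at hb
  revert hb
  refine step_cases B (runS G r B k) _ ?_ ?_ ?_ ?_ ?_
  · intro _ he; rw [he]; intro hb; exact absurd hb hnb
  · intro i rest _ _ he; rw [he]; intro hb; exact absurd hb hnb
  · intro i rest j' js _ _ _ he; rw [he]; intro hb; exact absurd hb hnb
  · intro i rest j' js hst htd hb' hr he
    rw [he]
    intro hb
    have hjj : j = j' := by
      rcases Finset.mem_insert.mp hb with h1 | h1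
      · exact h1
      · exact absurd h1 hnb
    subst hjj
    have hinv := inv_run G r B k
    have hjn : j ∈ nbrs G i := (hinv.todo_suffix i).subset (by rw [htd]; exact List.mem_cons_self)
    have hnd : (j :: js).Nodup := by
      have := (hinv.todo_suffix i).sublist.nodup (nbrs_nodup i)
      rwa [htd] at this
    refine ⟨i, rest, js, hst, htd, hr, hinv.stack_burnt i
      (by rw [hst]; exact List.mem_cons_self), ?_, ?_, ?_, ?_⟩
    · rw [runS_succ, he]; exact Function.update_self _ _ _
    · rw [runS_succ, he]
    · exact fun hc => hc.2 (by rw [htd]; exact List.mem_cons_self)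
    · refine ⟨hjn, ?_⟩
      rw [runS_succ, he]
      show j ∉ Function.update (runS G r B k).todo i js i
      rw [Function.update_self]
      exact (List.nodup_cons.mp hnd).1
  · intro i rest j' js _ _ _ _ he; rw [he]; intro hb; exact absurd hb hnb

/-- burn time of a vertex (meaningful only if it is ever burnt). -/
noncomputable def bt (v : Fin (n+1)) : ℕ := sInf {k | Bn G r B k v}

lemma bt_spec {v : Fin (n+1)} (h : ∃ k, Bn G r B k v) : Bn G r B (bt G r B v) v :=
  Nat.sInf_mem h

lemma bt_le {v : Fin (n+1)} {k} (h : Bn G r B k v) : bt G r B v ≤ k := Nat.sInf_le h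

lemma not_Bn_lt_bt {v : Fin (n+1)} {k} (h : k < bt G r B v) : ¬ Bn G r B k v :=
  fun hc => absurd (bt_le G r B hc) (Nat.not_le_of_lt h)

lemma Bn_bt_le {v : Fin (n+1)} {k} (hv : ∃ m, Bn G r B m v) (h : bt G r B v ≤ k) :
    Bn G r B k v :=
  Bn_mono G r B h (bt_spec G r B hv)

lemma bt_root : bt G r B r = 0 :=
  Nat.le_zero.mp (bt_le G r B (by simp [Bn, runS_zero, init]))

lemma Bn_zero_iff {v : Fin (n+1)} : Bn G r B 0 v ↔ v = r := by
  simp [Bn, runS_zero, init]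

lemma bt_eq_zero_iff {v : Fin (n+1)} (hv : ∃ m, Bn G r B m v) : bt G r B v = 0 ↔ v = r := by
  constructor
  · intro h
    have h2 := bt_spec G r B hv
    rw [h] at h2
    exact (Bn_zero_iff G r B).mp h2
  · intro h; rw [h]; exact bt_root G r B

lemma burnStep_bt {v : Fin (n+1)} (hv : ∃ m, Bn G r B m v) (hr : v ≠ r) :
    ∃ k, bt G r B v = k + 1 ∧ BurnStep G r B k v := by
  have h0 : bt G r B v ≠ 0 := fun h => hr ((bt_eq_zero_iff G r B hv).mp h)
  obtain ⟨k, hk⟩ := Nat.exists_eq_succ_of_ne_zero h0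
  refine ⟨k, hk, ?_, ?_⟩
  · exact not_Bn_lt_bt G r B (by omega)
  · have h2 := bt_spec G r B hv
    rw [hk] at h2
    exact h2

lemma bt_inj {v w : Fin (n+1)} (hv : ∃ m, Bn G r B m v) (hw : ∃ m, Bn G r B m w)
    (h : bt G r B v = bt G r B w) : v = w := by
  by_cases hvr : v = r
  · rw [hvr, bt_root G r B] at h
    rw [hvr, ((bt_eq_zero_iff G r B hw).mp h.symm)]
  by_cases hwr : w = r
  · rw [hwr, bt_root G r B] at h
    exact absurd ((bt_eq_zero_iff G r B hv).mp h) hvr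
  obtain ⟨k, hk, hbs⟩ := burnStep_bt G r B hv hvr
  obtain ⟨k', hk', hbs'⟩ := burnStep_bt G r B hw hwr
  have hkk : k = k' := by omega
  subst hkk
  exact burnStep_unique_step G r B hbs hbs'

end RunLemmas
end PFGProof
namespace PFGProof
open PFG

section Termination
variable {n : ℕ}

/-- Termination measure. -/
noncomputable def meas (s : St n) : ℕ :=
  2 * ((n+1) - s.burnt.card) + (∑ v : Fin (n+1), (s.todo v).length) + s.stack.length

lemma sum_len_update (td : Fin (n+1) → List (Fin (n+1))) (i j : Fin (n+1))
    (js : List (Fin (n+1))) (htd : td i = j :: js) :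
    (∑ v : Fin (n+1), ((Function.update td i js) v).length) + 1
      = ∑ v : Fin (n+1), (td v).length := by
  classical
  rw [← Finset.add_sum_erase _ (fun v => ((Function.update td i js) v).length) (Finset.mem_univ i),
      ← Finset.add_sum_erase _ (fun v => (td v).length) (Finset.mem_univ i)]
  have h1 : (Function.update td i js i).length = js.length := by simp
  have h2 : ∑ v ∈ Finset.univ.erase i, ((Function.update td i js) v).length
      = ∑ v ∈ Finset.univ.erase i, (td v).length := by
    refine Finset.sum_congr rfl ?_
    intro v hv
    rw [Function.update_of_ne (Finset.ne_of_mem_erase hv)]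
  simp only [h1, h2]
  have h3 : (td i).length = js.length + 1 := by rw [htd]; simp
  omega

variable {B : Fin (n+1) → Fin (n+1) → ℕ → Prop} {s : St n}

lemma meas_decr (h : s.stack ≠ []) : meas (step B s) < meas s := by
  classical
  have hbcard : s.burnt.card ≤ n + 1 := by
    simpa using Finset.card_le_card (Finset.subset_univ s.burnt)
  refine step_cases B s _ ?_ ?_ ?_ ?_ ?_
  · intro h' _; exact absurd h' h
  · intro i rest hst _ he; rw [he]
    unfold meas
    simp only [hst]
    simp [List.length_cons]
  · intro i rest j js hst htd _ he; rw [he]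
    unfold meas
    dsimp only
    have hsum := sum_len_update s.todo i j js htd
    omega
  · intro i rest j js hst htd hb _ he; rw [he]
    unfold meas
    have hins : (insert j s.burnt).card = s.burnt.card + 1 := Finset.card_insert_of_notMem hb
    have hcard2 : (insert j s.burnt).card ≤ n + 1 := by
      simpa using Finset.card_le_card (Finset.subset_univ (insert j s.burnt))
    dsimp only
    have hsum := sum_len_update s.todo i j js htd
    simp only [hins, hst, List.length_cons]
    omega
  · intro i rest j js hst htd _ _ he; rw [he]
    unfold meas
    dsimp only
    have hsum := sum_len_update s.todo i j js htd
    omega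

end Termination

section Termination2
variable {n : ℕ}
variable (G : SimpleGraph (Fin (n+1))) (r : Fin (n+1))
  (B : Fin (n+1) → Fin (n+1) → ℕ → Prop)

lemma meas_run (k : ℕ) (h : (runS G r B k).stack ≠ []) :
    meas (runS G r B k) + k ≤ meas (runS G r B 0) := by
  induction k with
  | zero => omega
  | succ k ih =>
    have hk : (runS G r B k).stack ≠ [] := by
      intro hc
      rw [runS_succ, step_nil hc] at h
      exact h hc
    have := meas_decr (B := B) (s := runS G r B k) hk
    rw [← runS_succ] at this
    have := ih hk
    omega

/-- Stopping time. -/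
noncomputable def stopT : ℕ := meas (init G r : St n) + 1

lemma stack_stop : (runS G r B (stopT G r)).stack = [] := by
  by_contra hc
  have := meas_run G r B (stopT G r) hc
  rw [runS_zero] at this
  unfold stopT at this
  omega

lemma runS_stable {m : ℕ} (h : stopT G r ≤ m) : runS G r B m = runS G r B (stopT G r) := by
  induction m with
  | zero => rw [Nat.le_zero.mp h]
  | succ m ih =>
    rcases Nat.lt_or_ge (stopT G r) (m+1) with h' | h'
    · have h'' := Nat.lt_succ_iff.mp h'
      rw [runS_succ, ih h'', step_nil (stack_stop G r B)]
    · cases Nat.le_antisymm h h'; rfl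

lemma Sc_stop {x y : Fin (n+1)} (hx : Bn G r B (stopT G r) x) (hy : y ∈ nbrs G x) :
    Sc G r B (stopT G r) x y := by
  refine ⟨hy, ?_⟩
  have hinv := inv_run G r B (stopT G r)
  rw [hinv.popped_todo x hx (by rw [stack_stop]; exact List.not_mem_nil)]
  exact List.not_mem_nil

/-- Chains reach every member as an iterate of the head. -/
lemma chain_reaches {p : Fin (n+1) → Fin (n+1)} :
    ∀ (l : List (Fin (n+1))), l.IsChain (fun a b => p a = b) →
      ∀ v ∈ l, ∃ t, p^[t] l.headI = v := by
  intro l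
  induction l with
  | nil => intro _ v hv; exact absurd hv (List.not_mem_nil)
  | cons x l' ih =>
    intro hc v hv
    rcases List.mem_cons.mp hv with h | h
    · exact ⟨0, h.symm⟩
    · match l', h with
      | y :: l'', h =>
        rw [List.isChain_cons_cons] at hc
        obtain ⟨t, ht⟩ := ih hc.2 v h
        refine ⟨t + 1, ?_⟩
        simp only [List.headI] at ht ⊢
        rw [Function.iterate_succ_apply, hc.1]
        exact ht

end Termination2
end PFGProof
namespace PFGProof
open PFG

section FinalState
variable {n : ℕ} (G : SimpleGraph (Fin (n+1))) (r : Fin (n+1))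
  (B : Fin (n+1) → Fin (n+1) → ℕ → Prop)

/-- Final parent map. -/
noncomputable def pfin : Fin (n+1) → Fin (n+1) := (runS G r B (stopT G r)).par

/-- Final count. -/
noncomputable def cfin : Fin (n+1) → ℕ := (runS G r B (stopT G r)).cnt

lemma cfin_root : cfin G r B r = 0 := (inv_run G r B (stopT G r)).cnt_root

lemma pfin_root : pfin G r B r = r := (inv_run G r B (stopT G r)).par_root

lemma bt_le_stop {v : Fin (n+1)} (hv : Bn G r B (stopT G r) v) : bt G r B v ≤ stopT G r :=
  bt_le G r B hv

lemma burnStep_lt_stop {k : ℕ} {v : Fin (n+1)} (h : BurnStep G r B k v) : k < stopT G r := by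
  by_contra hc
  push_neg at hc
  have h1 : runS G r B k = runS G r B (stopT G r) := runS_stable G r B hc
  have h2 : runS G r B (k+1) = runS G r B (stopT G r) := runS_stable G r B (by omega)
  have := h.2
  rw [Bn, h2, ← h1] at this
  exact h.1 this

lemma scanStep_lt_stop {k : ℕ} {x y : Fin (n+1)} (h : ScanStep G r B k x y) : k < stopT G r := by
  by_contra hc
  push_neg at hc
  have h1 : runS G r B k = runS G r B (stopT G r) := runS_stable G r B hc
  have h2 : runS G r B (k+1) = runS G r B (stopT G r) := runS_stable G r B (by omega)
  have := h.2
  rw [Sc, h2, ← h1] at this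
  exact h.1 this

/-- Full description of the burning of a non-root vertex. -/
lemma burnStep_full {v : Fin (n+1)} (hv : ∃ m, Bn G r B m v) (hvr : v ≠ r) :
    ∃ k x rest js, BurnStep G r B k v ∧ bt G r B v = k + 1 ∧
      (runS G r B k).stack = x :: rest ∧ (runS G r B k).todo x = v :: js ∧
      B x v ((runS G r B k).cnt v) ∧ Bn G r B k x ∧ pfin G r B v = x ∧
      ScanStep G r B k x v ∧ (runS G r B (k+1)).stack = v :: x :: rest ∧
      (runS G r B (k+1)).cnt v = (runS G r B k).cnt v := by
  obtain ⟨k, hk, hbs⟩ := burnStep_bt G r B hv hvr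
  obtain ⟨x, rest, js, hst, htd, hrule, hxb, hpar, hstk, hscan⟩ := burnStep_spec G r B hbs
  have hklt : k < stopT G r := burnStep_lt_stop G r B hbs
  have hpfin : pfin G r B v = x := by
    rw [pfin, par_frozen G r B (by omega : k + 1 ≤ stopT G r) v hbs.2, hpar]
  have hcnt : (runS G r B (k+1)).cnt v = (runS G r B k).cnt v := by
    rw [runS_succ]
    rw [step_burn hst htd hbs.1 hrule]
  exact ⟨k, x, rest, js, hbs, hk, hst, htd, hrule, hxb, hpfin, hscan, hstk, hcnt⟩

lemma bt_parent_lt {v : Fin (n+1)} (hv : ∃ m, Bn G r B m v) (hvr : v ≠ r) :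
    bt G r B (pfin G r B v) < bt G r B v := by
  obtain ⟨k, x, rest, js, hbs, hk, _, _, _, hxb, hpfin, _, _, _⟩ := burnStep_full G r B hv hvr
  rw [hpfin, hk]
  exact Nat.lt_succ_of_le (bt_le G r B hxb)

variable (HB : ∀ v, Bn G r B (stopT G r) v)

include HB in
lemma pfin_reaches : ∀ v, ∃ k, (pfin G r B)^[k] v = r := by
  have key : ∀ m v, bt G r B v ≤ m → ∃ k, (pfin G r B)^[k] v = r := by
    intro m
    induction m with
    | zero =>
      intro v hv
      refine ⟨0, ?_⟩
      exact (bt_eq_zero_iff G r B ⟨_, HB v⟩).mp (Nat.le_zero.mp hv)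
    | succ m ih =>
      intro v hv
      by_cases hvr : v = r
      · exact ⟨0, hvr⟩
      · have hlt := bt_parent_lt G r B ⟨_, HB v⟩ hvr
        obtain ⟨k, hk⟩ := ih (pfin G r B v) (by omega)
        exact ⟨k + 1, by rw [Function.iterate_succ_apply, hk]⟩
  exact fun v => key (bt G r B v) v le_rfl

include HB in
lemma anc_bt_lt {x v : Fin (n+1)} (h : IsAncestor (pfin G r B) x v) (hxr : x ≠ r) :
    bt G r B x < bt G r B v := by
  obtain ⟨t, ht, hit⟩ := h
  obtain ⟨t', rfl⟩ : ∃ t', t = t' + 1 := ⟨t - 1, by omega⟩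
  clear ht
  induction t' generalizing x with
  | zero =>
    rw [show (0:ℕ)+1 = 1 from rfl, Function.iterate_one] at hit
    have hvr : v ≠ r := by
      intro hc
      rw [hc, pfin_root] at hit
      exact hxr hit.symm
    rw [← hit]
    exact bt_parent_lt G r B ⟨_, HB v⟩ hvr
  | succ t ih =>
    rw [Function.iterate_succ_apply'] at hit
    have hwr : (pfin G r B)^[t+1] v ≠ r := by
      intro hc
      rw [hc, pfin_root] at hit
      exact hxr hit.symm
    have h1 : bt G r B x < bt G r B ((pfin G r B)^[t+1] v) := by
      rw [← hit]
      exact bt_parent_lt G r B ⟨_, HB _⟩ hwr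
    exact h1.trans (ih hwr rfl)

include HB in
lemma no_anc_self {x : Fin (n+1)} (hxr : x ≠ r) : ¬ IsAncestor (pfin G r B) x x :=
  fun h => lt_irrefl _ (anc_bt_lt G r B HB h hxr)

/-- The rooted spanning tree read off from a completed run. -/
noncomputable def treeOf : RootedSpanningTree G r where
  parent := pfin G r B
  parent_root := pfin_root G r B
  adj_parent := fun v hv => ((inv_run G r B (stopT G r)).burnt_adj v (HB v) hv).1
  reaches_root := pfin_reaches G r B HB

include HB in
/-- The unique scan of a vertex by its final parent is its burning scan. -/
lemma scan_pfin_burn {j : Fin (n+1)} (hjr : j ≠ r) {k : ℕ} {x : Fin (n+1)}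
    (hsc : ScanStep G r B k x j) (hx : x = pfin G r B j) : BurnStep G r B k j := by
  obtain ⟨k0, x0, rest, js, hbs, _, _, _, _, _, hpfin, hscan0, _, _⟩ :=
    burnStep_full G r B ⟨_, HB j⟩ hjr
  have : k = k0 := scanStep_unique G r B hsc (by rw [hx, hpfin]; exact hscan0)
  rw [this]
  exact hbs

end FinalState
end PFGProof
namespace PFGProof
open PFG

section Classify
variable {n : ℕ} (G : SimpleGraph (Fin (n+1))) (r : Fin (n+1))
  (B : Fin (n+1) → Fin (n+1) → ℕ → Prop)

lemma scanStep_head_burnt {k : ℕ} {x y : Fin (n+1)} (h : ScanStep G r B k x y) :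
    Bn G r B k x := by
  obtain ⟨rest, js, hst, _⟩ := scanStep_spec G r B h
  exact (inv_run G r B k).stack_burnt x (by rw [hst]; exact List.mem_cons_self)

/-- Members of the stack are `pfin`-iterates of the head. -/
lemma chain_pfin {k : ℕ} (hk : k ≤ stopT G r) :
    ∀ (l : List (Fin (n+1))), l.IsChain (fun a b => (runS G r B k).par a = b) →
      (∀ a ∈ l, Bn G r B k a) → ∀ v ∈ l, ∃ t, (pfin G r B)^[t] l.headI = v := by
  intro l
  induction l with
  | nil => intro _ _ v hv; exact absurd hv (List.not_mem_nil)
  | cons x l' ih =>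
    intro hc hb v hv
    rcases List.mem_cons.mp hv with h | h
    · exact ⟨0, h.symm⟩
    · match l', h with
      | y :: l'', h =>
        rw [List.isChain_cons_cons] at hc
        obtain ⟨t, ht⟩ := ih hc.2 (fun a ha => hb a (List.mem_cons_of_mem _ ha)) v h
        refine ⟨t + 1, ?_⟩
        simp only [List.headI] at ht ⊢
        rw [Function.iterate_succ_apply]
        have hx : pfin G r B x = (runS G r B k).par x :=
          par_frozen G r B hk x (hb x (List.mem_cons_self))
        rw [hx, hc.1]
        exact ht

variable (HB : ∀ v, Bn G r B (stopT G r) v)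

include HB in
/-- If the final parent of `j` is done (popped), then `j` is burnt. -/
lemma done_scan_burn {k : ℕ} {j : Fin (n+1)} (hjr : j ≠ r)
    (hd1 : Bn G r B k (pfin G r B j)) (hd2 : pfin G r B j ∉ (runS G r B k).stack) :
    Bn G r B k j := by
  have hadj : G.Adj (pfin G r B j) j :=
    ((inv_run G r B (stopT G r)).burnt_adj j (HB j) hjr).1
  have hsc : Sc G r B k (pfin G r B j) j := by
    refine ⟨mem_nbrs.mpr hadj, ?_⟩
    rw [(inv_run G r B k).popped_todo _ hd1 hd2]
    exact List.not_mem_nil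
  obtain ⟨m, hm, hms⟩ := exists_scanStep G r B hsc
  have := scan_pfin_burn G r B HB hjr hms rfl
  exact Bn_mono G r B (by omega) this.2

include HB in
/-- All final-tree descendants of a burnt child `c` of the current stack head
are burnt and off the stack. -/
lemma desc_done {k : ℕ} {x c : Fin (n+1)} {rest : List (Fin (n+1))}
    (hk : k ≤ stopT G r) (hst : (runS G r B k).stack = x :: rest)
    (hc : pfin G r B c = x) (hcb : Bn G r B k c) (hcr : c ≠ r) :
    ∀ t v, (pfin G r B)^[t] v = c → Bn G r B k v ∧ v ∉ (runS G r B k).stack := by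
  have hinv := inv_run G r B k
  have hcs : c ∉ (runS G r B k).stack := by
    intro hmem
    obtain ⟨s, hs⟩ := chain_pfin G r B hk _ hinv.chain hinv.stack_burnt c (hst ▸ hmem)
    rw [hst] at hs
    simp only [List.headI] at hs
    refine no_anc_self G r B HB hcr ⟨s + 1, by omega, ?_⟩
    rw [Function.iterate_succ_apply, hc]
    exact hs
  intro t
  induction t with
  | zero => intro v hv; simp only [Function.iterate_zero, id] at hv; exact hv ▸ ⟨hcb, hcs⟩
  | succ t ih =>
    intro v hv
    rw [Function.iterate_succ_apply] at hv
    obtain ⟨hw1, hw2⟩ := ih (pfin G r B v) hv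
    have hvr : v ≠ r := by
      intro hh
      rw [hh] at hv
      rw [pfin_root] at hv
      have : (pfin G r B)^[t+1] r = c := by
        rw [Function.iterate_succ_apply, pfin_root]; exact hv
      have hr : ∀ s, (pfin G r B)^[s] r = r := by
        intro s
        induction s with
        | zero => rfl
        | succ s ihs => rw [Function.iterate_succ_apply, pfin_root]; exact ihs
      rw [hr] at this
      exact hcr this.symm
    have hvb : Bn G r B k v := done_scan_burn G r B HB hvr hw1 hw2
    refine ⟨hvb, ?_⟩
    intro hmem
    obtain ⟨s, hs⟩ := chain_pfin G r B hk _ hinv.chain hinv.stack_burnt v (hmem)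
    rw [hst] at hs
    simp only [List.headI] at hs
    -- x's iterate reaches v, v's (t+1)-iterate is c, pfin c = x: cycle at c
    refine no_anc_self G r B HB hcr ⟨(t+1) + s + 1, by omega, ?_⟩
    have h1 : (pfin G r B)^[(t+1) + s] x = c := by
      rw [Function.iterate_add_apply, hs, Function.iterate_succ_apply] ; exact hv
    rw [Function.iterate_succ_apply, hc]
    exact h1

include HB in
/-- A late scan from the earlier-burnt endpoint produces a κ-inversion. -/
lemma late_first_kappa {x y : Fin (n+1)} {k : ℕ} (hscan : ScanStep G r B k x y)
    (hlate : Bn G r B k y) (hfirst : bt G r B x < bt G r B y) :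
    ∃ c, IsKappaInversion G r (pfin G r B) c y ∧ pfin G r B c = x := by
  classical
  have hklt : k < stopT G r := scanStep_lt_stop G r B hscan
  have hyr : y ≠ r := by
    intro hh
    rw [hh, bt_root] at hfirst
    omega
  obtain ⟨m, x0, rest0, js0, hbs, hbt, hst0, htd0, _, _, hpfy, hscan0, hstk1, _⟩ :=
    burnStep_full G r B ⟨_, HB y⟩ hyr
  have hmk : m < k := by
    have h1 : bt G r B y ≤ k := bt_le G r B hlate
    omega
  -- x is on the stack at time m
  obtain ⟨restk, jsk, hstk, htdk⟩ := scanStep_spec G r B hscan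
  have hxk : x ∈ (runS G r B k).stack := by rw [hstk]; exact List.mem_cons_self
  have hxbm : Bn G r B m x := by
    have : bt G r B x ≤ m := by omega
    exact Bn_bt_le G r B ⟨_, HB x⟩ this
  have hxm : x ∈ (runS G r B m).stack :=
    stack_of_burnt G r B (Nat.le_of_lt hmk) x hxbm hxk
  have hinvm := inv_run G r B m
  obtain ⟨t, ht⟩ := chain_pfin G r B (by omega) _ hinvm.chain hinvm.stack_burnt x hxm
  rw [hst0] at ht
  simp only [List.headI] at ht
  -- pfin^[t+1] y = x
  have hty : (pfin G r B)^[t+1] y = x := by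
    rw [Function.iterate_succ_apply, hpfy]
    exact ht
  -- choose minimal s with pfin^[s+1] y = x
  have hex : ∃ s, (pfin G r B)^[s+1] y = x := ⟨t, hty⟩
  set t1 := sInf {s | (pfin G r B)^[s+1] y = x} with ht1def
  have ht1 : (pfin G r B)^[t1+1] y = x := Nat.sInf_mem hex
  have hmin : ∀ s < t1, (pfin G r B)^[s+1] y ≠ x := by
    intro s hs hc
    have h2 : t1 ≤ s := by rw [ht1def]; exact Nat.sInf_le hc
    omega
  -- t1 = 0 impossible
  have ht1pos : 0 < t1 := by
    rcases Nat.eq_zero_or_pos t1 with h0 | h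
    · exfalso
      rw [h0] at ht1
      have hxy : x = pfin G r B y := by simpa using ht1.symm
      exact (scan_pfin_burn G r B HB hyr hscan hxy).1 hlate
    · exact h
  set c := (pfin G r B)^[t1] y with hcdef
  have hpc : pfin G r B c = x := by
    show pfin G r B ((pfin G r B)^[t1] y) = x
    rw [← Function.iterate_succ_apply' (pfin G r B) t1 y]
    exact ht1
  have hcr : c ≠ r := by
    intro hh
    have hxr : x = r := by rw [← hpc, hh, pfin_root]
    have : (pfin G r B)^[(t1-1)+1] y = x := by
      have : (t1-1)+1 = t1 := by omega
      rw [this, hcdef] at *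
      rw [← hcdef] at *
      rw [hh, hxr]
    exact hmin (t1-1) (by omega) this
  have hanc : IsAncestor (pfin G r B) c y := ⟨t1, ht1pos, rfl⟩
  -- y < c via scan order
  obtain ⟨mc, xc, restc, jsc, hbsc, hbtc, _, _, _, _, hpfc, hscanc, _, _⟩ :=
    burnStep_full G r B ⟨_, HB c⟩ hcr
  have hxcx : xc = x := by rw [← hpfc, hpc]
  rw [hxcx] at hscanc
  have hbtcy : bt G r B c < bt G r B y := anc_bt_lt G r B HB hanc hcr
  have hmck : mc < k := by
    have : bt G r B y ≤ k := bt_le G r B hlate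
    omega
  have hscc : Sc G r B k x c := Sc_mono G r B (by omega) hscanc.2
  have hcnbr : c ∈ nbrs G x := by
    refine mem_nbrs.mpr ?_
    rw [← hpc]
    exact ((inv_run G r B (stopT G r)).burnt_adj c (HB c) hcr).1
  have hytd : y ∈ (runS G r B k).todo x := by rw [htdk]; exact List.mem_cons_self
  have hyc : c > y :=
    gt_of_scanned ((inv_run G r B k).todo_suffix x) hytd hcnbr hscc.2
  have hadjy : G.Adj (pfin G r B c) y := by
    rw [hpc]
    exact mem_nbrs.mp hscan.2.1
  exact ⟨c, ⟨hanc, hyc, hcr, hadjy⟩, hpc⟩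

include HB in
/-- Conversely, every κ-inversion comes from a late scan from the
earlier-burnt endpoint. -/
lemma kappa_late {c y : Fin (n+1)} (hki : IsKappaInversion G r (pfin G r B) c y) :
    ∃ k, ScanStep G r B k (pfin G r B c) y ∧ Bn G r B k y ∧
      bt G r B (pfin G r B c) < bt G r B y := by
  obtain ⟨hanc, hyc, hcr, hadj⟩ := hki
  set x := pfin G r B c with hxdef
  have hbtx : bt G r B x < bt G r B c := bt_parent_lt G r B ⟨_, HB c⟩ hcr
  have hbtcy : bt G r B c < bt G r B y := anc_bt_lt G r B HB hanc hcr
  -- the scan of y by x exists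
  have hsc : Sc G r B (stopT G r) x y := Sc_stop G r B (HB x) (mem_nbrs.mpr hadj)
  obtain ⟨k, hk, hscan⟩ := exists_scanStep G r B hsc
  refine ⟨k, hscan, ?_, by omega⟩
  -- burning data of c
  obtain ⟨m, xc, restc, jsc, hbsc, hbtc, hstc, htdc, _, _, hpfc, hscanc, hstk1, _⟩ :=
    burnStep_full G r B ⟨_, HB c⟩ hcr
  have hxcx : xc = x := by rw [← hpfc]
  -- k > m
  have hcy : c ≠ y := fun h => lt_irrefl _ (h ▸ hyc)
  have hkm : m < k := by
    rcases Nat.lt_trichotomy k m with h | h | h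
    · -- y scanned before c was: contradiction with y < c
      exfalso
      have hsy : Sc G r B m x y := Sc_mono G r B (by omega) hscan.2
      have hctd : c ∈ (runS G r B m).todo xc := by
        rw [htdc]; exact List.mem_cons_self
      rw [hxcx] at hctd
      have := gt_of_scanned ((inv_run G r B m).todo_suffix x) hctd
        (mem_nbrs.mpr hadj) hsy.2
      omega
    · exfalso
      rw [hxcx] at hscanc
      rw [← h] at hscanc
      -- same step scans both (x,c) and (x,y): heads coincide
      obtain ⟨r1, j1, e1, e2⟩ := scanStep_spec G r B hscan
      obtain ⟨r2, j2, e3, e4⟩ := scanStep_spec G r B hscanc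
      rw [e2] at e4
      exact hcy (by injection e4 with h1 _; exact h1.symm)
    · exact h
  -- apply desc_done at time k with head x
  obtain ⟨restk, jsk, hstk, _⟩ := scanStep_spec G r B hscan
  have hcbk : Bn G r B k c := Bn_bt_le G r B ⟨_, HB c⟩ (by omega)
  obtain ⟨t, _, hit⟩ := hanc
  have := (desc_done G r B HB (by omega : k ≤ stopT G r) hstk hxdef.symm hcbk hcr) t y hit
  exact this.1

include HB in
/-- Classification of an early scan. -/
lemma early_cases {x y : Fin (n+1)} {k : ℕ} (hscan : ScanStep G r B k x y)
    (hearly : ¬ Bn G r B k y) :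
    (Bn G r B (k+1) y ∧ pfin G r B y = x ∧
        (runS G r B (k+1)).cnt y = (runS G r B k).cnt y) ∨
      (¬ Bn G r B (k+1) y ∧ (runS G r B (k+1)).cnt y = (runS G r B k).cnt y + 1 ∧
        x ≠ pfin G r B y) := by
  obtain ⟨rest, js, hst, htd⟩ := scanStep_spec G r B hscan
  have hyr : y ≠ r := by
    intro hh
    exact hearly (by rw [hh]; exact Bn_mono G r B (Nat.zero_le k) ((Bn_zero_iff G r B).mpr rfl))
  by_cases hrule : B x y ((runS G r B k).cnt y)
  · left
    have he := step_burn (B := B) hst htd hearly hrule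
    have hbn : Bn G r B (k+1) y := by
      rw [Bn, runS_succ, he]
      exact Finset.mem_insert_self _ _
    refine ⟨hbn, ?_, ?_⟩
    · have h1 : (runS G r B (k+1)).par y = x := by
        rw [runS_succ, he]; exact Function.update_self _ _ _
      rw [pfin, par_frozen G r B (scanStep_lt_stop G r B hscan) y hbn, h1]
    · rw [runS_succ, he]
  · right
    have he := step_cnt (B := B) hst htd hearly hrule
    have hbn : ¬ Bn G r B (k+1) y := by
      rw [Bn, runS_succ, he]
      exact hearly
    refine ⟨hbn, ?_, ?_⟩
    · rw [runS_succ, he]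
      exact Function.update_self _ _ _
    · intro hh
      exact hbn (scan_pfin_burn G r B HB hyr hscan hh).2

end Classify
end PFGProof
namespace PFGProof
open PFG

section CntFormula
variable {n : ℕ} (G : SimpleGraph (Fin (n+1))) (r : Fin (n+1))
  (B : Fin (n+1) → Fin (n+1) → ℕ → Prop)

/-- `x` contributed a counting (pre-burn, non-burning) scan to `y`. -/
def CS (x y : Fin (n+1)) : Prop :=
  ∃ m, ScanStep G r B m x y ∧ ¬ Bn G r B (m+1) y

open Classical in
lemma cnt_set_step {k : ℕ} {i j : Fin (n+1)} {js rest : List (Fin (n+1))} (y : Fin (n+1))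
    (hst : (runS G r B k).stack = i :: rest) (htd : (runS G r B k).todo i = j :: js)
    (htodo' : (runS G r B (k+1)).todo = Function.update (runS G r B k).todo i js) :
    Set.ncard {x | CS G r B x y ∧ Sc G r B (k+1) x y} =
      Set.ncard {x | CS G r B x y ∧ Sc G r B k x y} +
        (if y = j ∧ CS G r B i j then 1 else 0) := by
  classical
  have hjn : j ∈ nbrs G i := ((inv_run G r B k).todo_suffix i).subset
    (by rw [htd]; exact List.mem_cons_self)
  have hnd : (j :: js).Nodup := by
    have := ((inv_run G r B k).todo_suffix i).sublist.nodup (nbrs_nodup i)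
    rwa [htd] at this
  have hScj : ScanStep G r B k i j := by
    constructor
    · rintro ⟨_, h2⟩
      exact h2 (by rw [htd]; exact List.mem_cons_self)
    · refine ⟨hjn, ?_⟩
      rw [htodo', Function.update_self]
      exact (List.nodup_cons.mp hnd).1
  have hSc_ne : ∀ x, x ≠ i → (Sc G r B (k+1) x y ↔ Sc G r B k x y) := by
    intro x hx
    rw [Sc, Sc, htodo', Function.update_of_ne hx]
  have hSc_i_ne : y ≠ j → (Sc G r B (k+1) i y ↔ Sc G r B k i y) := by
    intro hyj
    rw [Sc, Sc, htodo', Function.update_self, htd]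
    constructor
    · rintro ⟨h1, h2⟩
      refine ⟨h1, fun hc => h2 ?_⟩
      rcases List.mem_cons.mp hc with h | h
      · exact absurd h hyj
      · exact h
    · rintro ⟨h1, h2⟩
      exact ⟨h1, fun hc => h2 (List.mem_cons_of_mem _ hc)⟩
  by_cases hyj : y = j
  · subst hyj
    by_cases hcs : CS G r B i y
    · have hset : {x | CS G r B x y ∧ Sc G r B (k+1) x y} =
          insert i {x | CS G r B x y ∧ Sc G r B k x y} := by
        ext x
        simp only [Set.mem_setOf_eq, Set.mem_insert_iff]
        constructor
        · rintro ⟨h1, h2⟩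
          by_cases hx : x = i
          · exact Or.inl hx
          · exact Or.inr ⟨h1, (hSc_ne x hx).mp h2⟩
        · rintro (hx | ⟨h1, h2⟩)
          · exact hx ▸ ⟨hcs, hScj.2⟩
          · exact ⟨h1, Sc_mono G r B (Nat.le_succ k) h2⟩
      rw [hset, Set.ncard_insert_of_notMem (fun hc => hScj.1 hc.2) (Set.toFinite _)]
      simp [hcs]
    · have hset : {x | CS G r B x y ∧ Sc G r B (k+1) x y} =
          {x | CS G r B x y ∧ Sc G r B k x y} := by
        ext x
        simp only [Set.mem_setOf_eq]
        constructor
        · rintro ⟨h1, h2⟩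
          by_cases hx : x = i
          · exact absurd (hx ▸ h1) hcs
          · exact ⟨h1, (hSc_ne x hx).mp h2⟩
        · rintro ⟨h1, h2⟩
          exact ⟨h1, Sc_mono G r B (Nat.le_succ k) h2⟩
      rw [hset]
      simp [hcs]
  · have hset : {x | CS G r B x y ∧ Sc G r B (k+1) x y} =
        {x | CS G r B x y ∧ Sc G r B k x y} := by
      ext x
      simp only [Set.mem_setOf_eq]
      constructor
      · rintro ⟨h1, h2⟩
        by_cases hx : x = i
        · subst hx
          exact ⟨h1, (hSc_i_ne hyj).mp h2⟩
        · exact ⟨h1, (hSc_ne x hx).mp h2⟩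
      · rintro ⟨h1, h2⟩
        exact ⟨h1, Sc_mono G r B (Nat.le_succ k) h2⟩
    rw [hset]
    simp [hyj]

lemma cnt_eq (k : ℕ) (y : Fin (n+1)) :
    (runS G r B k).cnt y = Set.ncard {x | CS G r B x y ∧ Sc G r B k x y} := by
  classical
  induction k with
  | zero =>
    have h1 : {x | CS G r B x y ∧ Sc G r B 0 x y} = (∅ : Set (Fin (n+1))) := by
      ext x
      simp only [Set.mem_setOf_eq, Set.mem_empty_iff_false, iff_false, not_and]
      exact fun _ => not_Sc_zero G r B x y
    rw [h1]
    simp [runS_zero, init]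
  | succ k ih =>
    refine step_cases B (runS G r B k) _ ?_ ?_ ?_ ?_ ?_
    · intro _ he
      have hrun : runS G r B (k+1) = runS G r B k := by rw [runS_succ, he]
      have hSc : ∀ x, Sc G r B (k+1) x y ↔ Sc G r B k x y := by
        intro x
        unfold Sc
        rw [hrun]
      rw [hrun, ih]
      congr 1
      ext x
      simp only [Set.mem_setOf_eq, hSc]
    · intro i rest hst htd he
      have hcnt : (runS G r B (k+1)).cnt y = (runS G r B k).cnt y := by
        rw [runS_succ, he]
      have htodo : ∀ x, (runS G r B (k+1)).todo x = (runS G r B k).todo x := by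
        intro x; rw [runS_succ, he]
      rw [hcnt, ih]
      congr 1
      ext x
      simp only [Set.mem_setOf_eq, Sc, htodo]
    · -- skip case
      intro i rest j js hst htd hb he
      have htodo' : (runS G r B (k+1)).todo = Function.update (runS G r B k).todo i js := by
        rw [runS_succ, he]
      have hcnt : (runS G r B (k+1)).cnt y = (runS G r B k).cnt y := by
        rw [runS_succ, he]
      have hCSij : ¬ CS G r B i j := by
        rintro ⟨m, hm1, hm2⟩
        have hScj : ScanStep G r B k i j := by
          constructor
          · rintro ⟨_, h2⟩
            exact h2 (by rw [htd]; exact List.mem_cons_self)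
          · refine ⟨((inv_run G r B k).todo_suffix i).subset
              (by rw [htd]; exact List.mem_cons_self), ?_⟩
            rw [htodo', Function.update_self]
            have hnd : (j :: js).Nodup := by
              have := ((inv_run G r B k).todo_suffix i).sublist.nodup (nbrs_nodup i)
              rwa [htd] at this
            exact (List.nodup_cons.mp hnd).1
        have hmk : m = k := scanStep_unique G r B hm1 hScj
        rw [hmk] at hm2
        exact hm2 (Bn_mono G r B (Nat.le_succ k) hb)
      rw [hcnt, ih, cnt_set_step G r B (y := y) hst htd htodo']
      simp [hCSij]
    · -- burn case
      intro i rest j js hst htd hb hrule he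
      have htodo' : (runS G r B (k+1)).todo = Function.update (runS G r B k).todo i js := by
        rw [runS_succ, he]
      have hcnt : (runS G r B (k+1)).cnt y = (runS G r B k).cnt y := by
        rw [runS_succ, he]
      have hCSij : ¬ CS G r B i j := by
        rintro ⟨m, hm1, hm2⟩
        have hScj : ScanStep G r B k i j := by
          constructor
          · rintro ⟨_, h2⟩
            exact h2 (by rw [htd]; exact List.mem_cons_self)
          · refine ⟨((inv_run G r B k).todo_suffix i).subset
              (by rw [htd]; exact List.mem_cons_self), ?_⟩
            rw [htodo', Function.update_self]
            have hnd : (j :: js).Nodup := by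
              have := ((inv_run G r B k).todo_suffix i).sublist.nodup (nbrs_nodup i)
              rwa [htd] at this
            exact (List.nodup_cons.mp hnd).1
        have hmk : m = k := scanStep_unique G r B hm1 hScj
        rw [hmk] at hm2
        refine hm2 ?_
        rw [Bn, runS_succ, he]
        exact Finset.mem_insert_self _ _
      rw [hcnt, ih, cnt_set_step G r B (y := y) hst htd htodo']
      simp [hCSij]
    · -- cnt case
      intro i rest j js hst htd hb hrule he
      have htodo' : (runS G r B (k+1)).todo = Function.update (runS G r B k).todo i js := by
        rw [runS_succ, he]
      have hCSij : CS G r B i j := by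
        refine ⟨k, ?_, ?_⟩
        · constructor
          · rintro ⟨_, h2⟩
            exact h2 (by rw [htd]; exact List.mem_cons_self)
          · refine ⟨((inv_run G r B k).todo_suffix i).subset
              (by rw [htd]; exact List.mem_cons_self), ?_⟩
            rw [htodo', Function.update_self]
            have hnd : (j :: js).Nodup := by
              have := ((inv_run G r B k).todo_suffix i).sublist.nodup (nbrs_nodup i)
              rwa [htd] at this
            exact (List.nodup_cons.mp hnd).1
        · rw [Bn, runS_succ, he]
          exact hb
      have hcnt : (runS G r B (k+1)).cnt y
          = (runS G r B k).cnt y + (if y = j then 1 else 0) := by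
        rw [runS_succ, he]
        show Function.update (runS G r B k).cnt j ((runS G r B k).cnt j + 1) y = _
        by_cases hyj : y = j
        · subst hyj
          rw [Function.update_self]
          simp
        · rw [Function.update_of_ne hyj]
          simp [hyj]
      rw [hcnt, ih, cnt_set_step G r B (y := y) hst htd htodo']
      by_cases hyj : y = j <;> simp [hyj, hCSij]

lemma cfin_eq (y : Fin (n+1)) :
    cfin G r B y = Set.ncard {x | CS G r B x y} := by
  rw [cfin]
  show (runS G r B (stopT G r)).cnt y = _
  rw [cnt_eq]
  congr 1
  ext x
  simp only [Set.mem_setOf_eq, and_iff_left_iff_imp]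
  rintro ⟨m, hm1, _⟩
  exact Sc_mono G r B (scanStep_lt_stop G r B hm1) hm1.2

end CntFormula
end PFGProof
namespace PFGProof
open PFG

lemma ncard_pair_fiber {α β : Type*} [Fintype α] [Fintype β] (Q : α → β → Prop) :
    Set.ncard {p : α × β | Q p.1 p.2} = ∑ y : β, Set.ncard {x | Q x y} := by
  classical
  have h1 : {p : α × β | Q p.1 p.2}.ncard
      = (Finset.univ.filter (fun p : α × β => Q p.1 p.2)).card := by
    rw [← Set.ncard_coe_finset]
    congr 1
    ext p
    simp
  rw [h1, Finset.card_eq_sum_card_fiberwise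
    (f := Prod.snd) (t := Finset.univ) (fun _ _ => Finset.mem_univ _)]
  refine Finset.sum_congr rfl ?_
  intro y _
  have h2 : (Finset.univ.filter (fun p : α × β => Q p.1 p.2)).filter (fun p => p.snd = y)
      = (Finset.univ.filter (fun x : α => Q x y)).image (fun x => (x, y)) := by
    ext ⟨a, b⟩
    simp only [Finset.mem_filter, Finset.mem_univ, true_and, Finset.mem_image]
    constructor
    · rintro ⟨hq, rfl⟩
      exact ⟨a, hq, rfl⟩
    · rintro ⟨x, hq, he⟩
      obtain ⟨h1, h2⟩ := Prod.mk.injEq _ _ _ _ ▸ he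
      exact ⟨h1 ▸ h2 ▸ hq, h2.symm ▸ rfl⟩
  rw [h2, Finset.card_image_of_injective _ (fun a b hab => (Prod.mk.injEq _ _ _ _ ▸ hab).1)]
  rw [← Set.ncard_coe_finset]
  congr 1
  ext x
  simp

section Counting
variable {n : ℕ} (G : SimpleGraph (Fin (n+1))) (r : Fin (n+1))
  (B : Fin (n+1) → Fin (n+1) → ℕ → Prop)

lemma pfin_iterate_root : ∀ s, (pfin G r B)^[s] r = r := by
  intro s
  induction s with
  | zero => rfl
  | succ s ih => rw [Function.iterate_succ_apply, pfin_root]; exact ih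

/-- pairs scanned late -/
def LateP : Set (Fin (n+1) × Fin (n+1)) :=
  {p | ∃ k, ScanStep G r B k p.1 p.2 ∧ Bn G r B k p.2}

/-- pairs scanned early -/
def EarlyP : Set (Fin (n+1) × Fin (n+1)) :=
  {p | ∃ k, ScanStep G r B k p.1 p.2 ∧ ¬ Bn G r B k p.2}

def FirstP : Set (Fin (n+1) × Fin (n+1)) :=
  {p | G.Adj p.1 p.2 ∧ bt G r B p.1 < bt G r B p.2}

def SecondP : Set (Fin (n+1) × Fin (n+1)) :=
  {p | G.Adj p.1 p.2 ∧ bt G r B p.2 < bt G r B p.1}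

def TreeP : Set (Fin (n+1) × Fin (n+1)) :=
  {p | G.Adj p.1 p.2 ∧ pfin G r B p.2 = p.1}

def CntP : Set (Fin (n+1) × Fin (n+1)) := {p | CS G r B p.1 p.2}

def DP : Set (Fin (n+1) × Fin (n+1)) := {p | G.Adj p.1 p.2 ∧ r = r ∧ B = B}

lemma scanStep_adj {k : ℕ} {x y : Fin (n+1)} (h : ScanStep G r B k x y) : G.Adj x y :=
  mem_nbrs.mp h.2.1

lemma not_early_late {p : Fin (n+1) × Fin (n+1)} (h1 : p ∈ EarlyP G r B)
    (h2 : p ∈ LateP G r B) : False := by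
  obtain ⟨k, hk1, hk2⟩ := h1
  obtain ⟨m, hm1, hm2⟩ := h2
  have := scanStep_unique G r B hk1 hm1
  subst this
  exact hk2 hm2

variable (HB : ∀ v, Bn G r B (stopT G r) v)

include HB in
lemma exists_scan_pair {p : Fin (n+1) × Fin (n+1)} (hp : p ∈ DP G r B) :
    ∃ k, ScanStep G r B k p.1 p.2 := by
  have hsc : Sc G r B (stopT G r) p.1 p.2 :=
    Sc_stop G r B (HB p.1) (mem_nbrs.mpr hp.1)
  obtain ⟨k, _, hk⟩ := exists_scanStep G r B hsc
  exact ⟨k, hk⟩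

include HB in
lemma early_or_late {p : Fin (n+1) × Fin (n+1)} (hp : p ∈ DP G r B) :
    p ∈ EarlyP G r B ∨ p ∈ LateP G r B := by
  obtain ⟨k, hk⟩ := exists_scan_pair G r B HB hp
  by_cases hb : Bn G r B k p.2
  · exact Or.inr ⟨k, hk, hb⟩
  · exact Or.inl ⟨k, hk, hb⟩

include HB in
lemma early_sub_first : EarlyP G r B ⊆ FirstP G r B := by
  rintro ⟨x, y⟩ ⟨k, hk, hb⟩
  refine ⟨scanStep_adj G r B hk, ?_⟩
  have h1 : bt G r B x ≤ k := bt_le G r B (scanStep_head_burnt G r B hk)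
  have h2 : k < bt G r B y := by
    by_contra hc
    push_neg at hc
    exact hb (Bn_bt_le G r B ⟨_, HB y⟩ hc)
  show bt G r B x < bt G r B y
  omega

include HB in
lemma first_eq : FirstP G r B = EarlyP G r B ∪ (LateP G r B ∩ FirstP G r B) := by
  ext p
  constructor
  · intro hp
    rcases early_or_late G r B HB (⟨hp.1, rfl, rfl⟩ : p ∈ DP G r B) with h | h
    · exact Or.inl h
    · exact Or.inr ⟨h, hp⟩
  · rintro (h | h)
    · exact early_sub_first G r B HB h
    · exact h.2

include HB in
lemma DP_eq : DP G r B = FirstP G r B ∪ SecondP G r B := by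
  ext ⟨x, y⟩
  constructor
  · rintro ⟨hp, -, -⟩
    dsimp only at hp
    have hne : x ≠ y := G.ne_of_adj hp
    have hbne : bt G r B x ≠ bt G r B y := fun h =>
      hne (bt_inj G r B ⟨_, HB x⟩ ⟨_, HB y⟩ h)
    rcases Nat.lt_or_ge (bt G r B x) (bt G r B y) with h | h
    · exact Or.inl ⟨hp, h⟩
    · refine Or.inr ⟨hp, ?_⟩
      show bt G r B y < bt G r B x
      omega
  · rintro (h | h)
    · exact ⟨h.1, rfl, rfl⟩
    · exact ⟨(h.1 : G.Adj x y).symm.symm, rfl, rfl⟩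

include HB in
lemma early_eq : EarlyP G r B = TreeP G r B ∪ CntP G r B := by
  ext ⟨x, y⟩
  constructor
  · rintro ⟨k, hk, hb⟩
    rcases early_cases G r B HB hk hb with ⟨_, h2, _⟩ | ⟨h1, _, h3⟩
    · exact Or.inl ⟨scanStep_adj G r B hk, h2⟩
    · exact Or.inr ⟨k, hk, h1⟩
  · rintro (⟨hadj, hpf⟩ | ⟨m, hm1, hm2⟩)
    · -- tree pair: its scan is the burn
      have hyr : y ≠ r := by
        intro hh
        rw [hh, pfin_root] at hpf
        rw [hh, ← hpf] at hadj
        exact G.loopless.irrefl _ hadj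
      obtain ⟨k, hk⟩ := exists_scan_pair G r B HB (⟨hadj, rfl, rfl⟩ : (x,y) ∈ DP G r B)
      have hbs := scan_pfin_burn G r B HB hyr hk hpf.symm
      exact ⟨k, hk, hbs.1⟩
    · exact ⟨m, hm1, fun hc => hm2 (Bn_mono G r B (Nat.le_succ m) hc)⟩

include HB in
lemma tree_cnt_disj : Disjoint (TreeP G r B) (CntP G r B) := by
  rw [Set.disjoint_left]
  rintro ⟨x, y⟩ ⟨hadj, hpf⟩ ⟨m, hm1, hm2⟩
  have hyr : y ≠ r := by
    intro hh
    rw [hh, pfin_root] at hpf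
    rw [hh, ← hpf] at hadj
    exact G.loopless.irrefl _ hadj
  exact hm2 (scan_pfin_burn G r B HB hyr hm1 hpf.symm).2

include HB in
lemma early_late_disj : Disjoint (EarlyP G r B) (LateP G r B ∩ FirstP G r B) := by
  rw [Set.disjoint_left]
  intro p h1 h2
  exact not_early_late G r B h1 h2.1

lemma first_second_disj : Disjoint (FirstP G r B) (SecondP G r B) := by
  rw [Set.disjoint_left]
  rintro ⟨x, y⟩ ⟨_, h1⟩ ⟨_, h2⟩
  dsimp only at h1 h2
  omega

lemma second_eq_swap : SecondP G r B = Prod.swap '' (FirstP G r B) := by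
  ext ⟨x, y⟩
  constructor
  · rintro ⟨hadj, hbt⟩
    exact ⟨(y, x), ⟨hadj.symm, hbt⟩, rfl⟩
  · rintro ⟨⟨a, b⟩, ⟨hadj, hbt⟩, he⟩
    obtain ⟨h1, h2⟩ := Prod.mk.injEq _ _ _ _ ▸ he
    subst h1; subst h2
    exact ⟨hadj.symm, hbt⟩

include HB in
lemma ncard_treeP : (TreeP G r B).ncard = n := by
  classical
  have e : TreeP G r B ≃ {v : Fin (n+1) // v ≠ r} := by
    refine ⟨fun p => ⟨p.val.2, ?_⟩, fun v => ⟨(pfin G r B v.val, v.val), ?_, rfl⟩, ?_, ?_⟩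
    · obtain ⟨⟨x, y⟩, hadj, hpf⟩ := p
      intro hh
      simp only at hh
      rw [hh, pfin_root] at hpf
      rw [hh, ← hpf] at hadj
      exact G.loopless.irrefl _ hadj
    · exact ((inv_run G r B (stopT G r)).burnt_adj v.val (HB v.val) v.prop).1
    · rintro ⟨⟨x, y⟩, hadj, hpf⟩
      exact Subtype.ext (Prod.ext hpf rfl)
    · intro v
      rfl
  have h1 : (TreeP G r B).ncard = Nat.card {v : Fin (n+1) // v ≠ r} := by
    rw [← Nat.card_coe_set_eq]
    exact Nat.card_congr e
  rw [h1]
  have h2 : {v : Fin (n+1) | v ≠ r} = ↑(Finset.univ.erase r) := by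
    ext v; simp
  have h3 : Nat.card {v : Fin (n+1) // v ≠ r} = ({v : Fin (n+1) | v ≠ r}).ncard :=
    Nat.card_coe_set_eq _
  rw [h3, h2, Set.ncard_coe_finset, Finset.card_erase_of_mem (Finset.mem_univ r)]
  simp

lemma ncard_cntP : (CntP G r B).ncard = degPF r (cfin G r B) := by
  have h1 : (CntP G r B).ncard = ∑ y : Fin (n+1), Set.ncard {x | CS G r B x y} :=
    ncard_pair_fiber _
  rw [h1]
  have h2 : ∀ y, Set.ncard {x | CS G r B x y} = cfin G r B y :=
    fun y => (cfin_eq G r B y).symm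
  simp only [h2]
  rw [degPF, ← Finset.add_sum_erase _ _ (Finset.mem_univ r), cfin_root, zero_add]

include HB in
lemma ncard_lateFirst :
    (LateP G r B ∩ FirstP G r B).ncard = kappaNum G r (pfin G r B) := by
  classical
  have himg : LateP G r B ∩ FirstP G r B =
      (fun q : Fin (n+1) × Fin (n+1) => (pfin G r B q.1, q.2)) ''
        {q | IsKappaInversion G r (pfin G r B) q.1 q.2} := by
    ext ⟨x, y⟩
    constructor
    · rintro ⟨⟨k, hk, hb⟩, ⟨hadj, hbt⟩⟩
      obtain ⟨c, hki, hpc⟩ := late_first_kappa G r B HB hk hb hbt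
      exact ⟨(c, y), hki, by rw [Prod.mk.injEq]; exact ⟨hpc, rfl⟩⟩
    · rintro ⟨⟨c, y'⟩, hki, he⟩
      have h1 : pfin G r B c = x := congrArg Prod.fst he
      have h2 : y' = y := congrArg Prod.snd he
      subst h2
      obtain ⟨k, hk1, hk2, hk3⟩ := kappa_late G r B HB hki
      rw [h1] at hk1 hk3
      exact ⟨⟨k, hk1, hk2⟩, scanStep_adj G r B hk1, hk3⟩
  rw [himg, Set.ncard_image_of_injOn, kappaNum]
  rintro ⟨c, y⟩ hc ⟨c', y'⟩ hc' he
  have h1 : pfin G r B c = pfin G r B c' := congrArg Prod.fst he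
  have h2 : y = y' := congrArg Prod.snd he
  subst h2
  rw [Prod.mk.injEq]
  refine ⟨?_, rfl⟩
  simp only [Set.mem_setOf_eq] at hc hc'
  obtain ⟨⟨t, htpos, hti⟩, _, hcr, _⟩ := hc
  obtain ⟨⟨t', htpos', hti'⟩, _, hcr', _⟩ := hc'
  have key : ∀ a b : ℕ, a < b → ∀ ca cb : Fin (n+1), (pfin G r B)^[a] y = ca →
      (pfin G r B)^[b] y = cb → ca ≠ r → cb ≠ r → pfin G r B ca = pfin G r B cb →
      False := by
    intro a b hab ca cb ha hb hcar hcbr hpp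
    by_cases hx0r : pfin G r B ca = r
    · have h5 : (pfin G r B)^[a+1] y = r := by
        rw [Function.iterate_succ_apply', ha]
        exact hx0r
      have hc1 : (pfin G r B)^[(b-(a+1)) + (a+1)] y = cb := by
        rw [show (b-(a+1))+(a+1) = b from by omega]
        exact hb
      rw [Function.iterate_add_apply, h5, pfin_iterate_root G r B] at hc1
      exact hcbr hc1.symm
    · have h5 : (pfin G r B)^[a+1] y = pfin G r B ca := by
        rw [Function.iterate_succ_apply', ha]
      have h6 : (pfin G r B)^[b+1] y = pfin G r B ca := by
        rw [Function.iterate_succ_apply', hb]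
        exact hpp.symm
      have hc2 : (pfin G r B)^[(b-a) + (a+1)] y = pfin G r B ca := by
        rw [show (b-a)+(a+1) = b+1 from by omega]
        exact h6
      rw [Function.iterate_add_apply, h5] at hc2
      exact no_anc_self G r B HB hx0r ⟨b - a, by omega, hc2⟩
  rcases Nat.lt_trichotomy t t' with h | h | h
  · exact absurd (key t t' h c c' hti hti' hcr hcr' h1) not_false
  · rw [← hti, ← hti', h]
  · exact absurd (key t' t h c' c hti' hti hcr' hcr h1.symm) not_false

include HB in
lemma ncard_DP : (DP G r B).ncard = 2 * G.edgeSet.ncard := by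
  classical
  letI : DecidableRel G.Adj := Classical.decRel _
  have e : G.Dart ≃ {p : Fin (n+1) × Fin (n+1) // p ∈ DP G r B} :=
    ⟨fun d => ⟨d.toProd, d.adj, rfl, rfl⟩, fun p => ⟨p.val, p.prop.1⟩,
      fun d => rfl, fun p => rfl⟩
  have h1 : (DP G r B).ncard = Fintype.card G.Dart := by
    rw [← Nat.card_coe_set_eq, ← Nat.card_eq_fintype_card]
    exact (Nat.card_congr e).symm
  rw [h1, SimpleGraph.dart_card_eq_twice_card_edges]
  congr 1
  rw [← SimpleGraph.coe_edgeFinset, Set.ncard_coe_finset]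

include HB in
/-- The main counting identity. -/
lemma count_identity :
    kappaNum G r (pfin G r B) + degPF r (cfin G r B) + (n + 1) = G.edgeSet.ncard + 1 := by
  classical
  have h1 : (DP G r B).ncard = (FirstP G r B).ncard + (SecondP G r B).ncard := by
    rw [DP_eq G r B HB]
    exact Set.ncard_union_eq (first_second_disj G r B) (Set.toFinite _) (Set.toFinite _)
  have h2 : (SecondP G r B).ncard = (FirstP G r B).ncard := by
    rw [second_eq_swap]
    exact Set.ncard_image_of_injective _ Prod.swap_injective
  have h3 : (FirstP G r B).ncard = (EarlyP G r B).ncard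
      + (LateP G r B ∩ FirstP G r B).ncard := by
    nth_rewrite 1 [first_eq G r B HB]
    exact Set.ncard_union_eq (early_late_disj G r B HB) (Set.toFinite _) (Set.toFinite _)
  have h4 : (EarlyP G r B).ncard = (TreeP G r B).ncard + (CntP G r B).ncard := by
    rw [early_eq G r B HB]
    exact Set.ncard_union_eq (tree_cnt_disj G r B HB) (Set.toFinite _) (Set.toFinite _)
  have h5 := ncard_treeP G r B HB
  have h6 := ncard_cntP G r B
  have h7 := ncard_lateFirst G r B HB
  have h8 := ncard_DP G r B HB
  omega

end Counting
end PFGProof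
namespace PFGProof
open PFG

section Parking
variable {n : ℕ} (G : SimpleGraph (Fin (n+1))) (r : Fin (n+1))
  (B : Fin (n+1) → Fin (n+1) → ℕ → Prop)

lemma lt_stop_of_stack {k : ℕ} (h : (runS G r B k).stack ≠ []) : k < stopT G r := by
  by_contra hc
  push_neg at hc
  rw [runS_stable G r B hc] at h
  exact h (stack_stop G r B)

variable (HB : ∀ v, Bn G r B (stopT G r) v)

include HB in
lemma parking_of_run : IsParkingFunction G r (cfin G r B) := by
  classical
  intro S hS hrS
  obtain ⟨j, hjS, hjmin⟩ := S.exists_min_image (bt G r B) hS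
  refine ⟨j, hjS, ?_⟩
  have hjr : j ≠ r := fun h => hrS (h ▸ hjS)
  have hsub : insert (pfin G r B j) {x | CS G r B x j} ⊆
      {x : Fin (n+1) | G.Adj j x ∧ x ∉ S} := by
    intro x hx
    rcases Set.mem_insert_iff.mp hx with h | h
    · subst h
      constructor
      · exact ((inv_run G r B (stopT G r)).burnt_adj j (HB j) hjr).1.symm
      · intro hc
        have h1 := hjmin _ hc
        have h2 := bt_parent_lt G r B ⟨_, HB j⟩ hjr
        omega
    · obtain ⟨m, hm1, hm2⟩ := h
      constructor
      · exact (scanStep_adj G r B hm1).symm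
      · intro hc
        have h1 := hjmin _ hc
        have h2 : bt G r B x ≤ m := bt_le G r B (scanStep_head_burnt G r B hm1)
        have h3 : ¬ Bn G r B m j := fun hh => hm2 (Bn_mono G r B (Nat.le_succ m) hh)
        have h4 : m < bt G r B j := by
          by_contra hcc
          push_neg at hcc
          exact h3 (Bn_bt_le G r B ⟨_, HB j⟩ hcc)
        omega
  have hnotmem : pfin G r B j ∉ {x | CS G r B x j} := by
    rintro ⟨m, hm1, hm2⟩
    exact hm2 (scan_pfin_burn G r B HB hjr hm1 rfl).2
  have h1 : (insert (pfin G r B j) {x | CS G r B x j}).ncard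
      = cfin G r B j + 1 := by
    rw [Set.ncard_insert_of_notMem hnotmem (Set.toFinite _), cfin_eq]
  have h2 : (insert (pfin G r B j) {x | CS G r B x j}).ncard
      ≤ sDeg G S j := by
    rw [sDeg]
    exact Set.ncard_le_ncard hsub (Set.toFinite _)
  omega

end Parking

section Forward
variable {n : ℕ} (G : SimpleGraph (Fin (n+1))) (r : Fin (n+1))

/-- Burning rule for the run driven by a given spanning tree. -/
def ruleT (T : RootedSpanningTree G r) : Fin (n+1) → Fin (n+1) → ℕ → Prop :=
  fun i j _ => T.parent j = i

lemma fwd_HB (T : RootedSpanningTree G r) :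
    ∀ v, Bn G r (ruleT G r T) (stopT G r) v := by
  have key : ∀ k v, T.parent^[k] v = r → Bn G r (ruleT G r T) (stopT G r) v := by
    intro k
    induction k with
    | zero =>
      intro v hv
      simp only [Function.iterate_zero, id] at hv
      rw [hv]
      exact Bn_mono G r _ (Nat.zero_le _) ((Bn_zero_iff G r _).mpr rfl)
    | succ k ih =>
      intro v hv
      rw [Function.iterate_succ_apply] at hv
      have hw : Bn G r (ruleT G r T) (stopT G r) (T.parent v) := ih _ hv
      by_cases hvr : v = r
      · rw [hvr]
        exact Bn_mono G r _ (Nat.zero_le _) ((Bn_zero_iff G r _).mpr rfl)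
      · have hadj : G.Adj (T.parent v) v := T.adj_parent v hvr
        have hsc : Sc G r (ruleT G r T) (stopT G r) (T.parent v) v :=
          Sc_stop G r _ hw (mem_nbrs.mpr hadj)
        obtain ⟨m, hmlt, hms⟩ := exists_scanStep G r _ hsc
        by_cases hbm : Bn G r (ruleT G r T) m v
        · exact Bn_mono G r _ (by omega) hbm
        · obtain ⟨rest, js, hst, htd⟩ := scanStep_spec G r _ hms
          have hb1 : Bn G r (ruleT G r T) (m+1) v := by
            rw [Bn, runS_succ, step_burn hst htd hbm rfl]
            exact Finset.mem_insert_self _ _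
          exact Bn_mono G r _ (by omega) hb1
  intro v
  obtain ⟨k, hk⟩ := T.reaches_root v
  exact key k v hk

lemma fwd_pfin (T : RootedSpanningTree G r) : pfin G r (ruleT G r T) = T.parent := by
  funext v
  by_cases hvr : v = r
  · rw [hvr, pfin_root, T.parent_root]
  · obtain ⟨k, x, rest, js, _, _, _, _, hrule, _, hpfin, _, _, _⟩ :=
      burnStep_full G r (ruleT G r T) ⟨_, fwd_HB G r T v⟩ hvr
    rw [hpfin, ← hrule]

/-- The parking function associated to a rooted spanning tree. -/
noncomputable def Phi (T : RootedSpanningTree G r) : Fin (n+1) → ℕ :=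
  cfin G r (ruleT G r T)

lemma Phi_root (T : RootedSpanningTree G r) : Phi G r T r = 0 := cfin_root G r _

lemma Phi_parking (T : RootedSpanningTree G r) : IsParkingFunction G r (Phi G r T) :=
  parking_of_run G r _ (fwd_HB G r T)

lemma Phi_identity (T : RootedSpanningTree G r) :
    kappaNum G r T.parent + degPF r (Phi G r T) + (n + 1) = G.edgeSet.ncard + 1 := by
  have := count_identity G r (ruleT G r T) (fwd_HB G r T)
  rwa [fwd_pfin G r T] at this

end Forward
end PFGProof
namespace PFGProof
open PFG

section Backward
variable {n : ℕ} (G : SimpleGraph (Fin (n+1))) (r : Fin (n+1))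

/-- Burning rule driven by a prospective parking function. -/
def ruleB (P : Fin (n+1) → ℕ) : Fin (n+1) → Fin (n+1) → ℕ → Prop :=
  fun _ j c => c = P j

lemma bwd_cnt_le (P : Fin (n+1) → ℕ) :
    ∀ k j, j ∉ (runS G r (ruleB P) k).burnt → (runS G r (ruleB P) k).cnt j ≤ P j := by
  intro k
  induction k with
  | zero => intro j _; simp [runS_zero, init]
  | succ k ih =>
    intro j hj
    have hjk : j ∉ (runS G r (ruleB P) k).burnt := by
      intro hc
      exact hj (burnt_mono G r (ruleB P) (Nat.le_succ k) hc)
    have hih := ih j hjk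
    rw [runS_succ]
    refine step_cases (ruleB P) (runS G r (ruleB P) k) _ ?_ ?_ ?_ ?_ ?_
    · intro _ he; rw [he]; exact hih
    · intro i rest _ _ he; rw [he]; exact hih
    · intro i rest j' js _ _ _ he; rw [he]; exact hih
    · intro i rest j' js _ _ _ _ he; rw [he]; exact hih
    · intro i rest j' js _ _ hb' hr he; rw [he]
      show Function.update (runS G r (ruleB P) k).cnt j' _ j ≤ P j
      by_cases hjj : j = j'
      · subst hjj
        rw [Function.update_self]
        have : ¬ ((runS G r (ruleB P) k).cnt j = P j) := hr
        omega
      · rw [Function.update_of_ne hjj]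
        exact hih

lemma bwd_HB (P : Fin (n+1) → ℕ) (hP : IsParkingFunction G r P) :
    ∀ v, Bn G r (ruleB P) (stopT G r) v := by
  classical
  by_contra hc
  push_neg at hc
  obtain ⟨v, hv⟩ := hc
  set S : Finset (Fin (n+1)) :=
    Finset.univ.filter (fun w => ¬ Bn G r (ruleB P) (stopT G r) w) with hSdef
  have hvS : v ∈ S := by rw [hSdef]; simp [hv]
  have hrS : r ∉ S := by
    rw [hSdef]
    simp only [Finset.mem_filter, Finset.mem_univ, true_and, not_not]
    exact Bn_mono G r _ (Nat.zero_le _) ((Bn_zero_iff G r _).mpr rfl)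
  obtain ⟨i, hiS, hideg⟩ := hP S ⟨v, hvS⟩ hrS
  have hiB : ¬ Bn G r (ruleB P) (stopT G r) i := by
    have := hiS
    rw [hSdef] at this
    simpa using this
  -- every unscanned-by burnt neighbour contributed a counting scan
  have hsub : {x : Fin (n+1) | G.Adj i x ∧ x ∉ S} ⊆ {x | CS G r (ruleB P) x i} := by
    rintro x ⟨hadj, hxS⟩
    have hxB : Bn G r (ruleB P) (stopT G r) x := by
      by_contra hcc
      exact hxS (by rw [hSdef]; simp [hcc])
    have hsc : Sc G r (ruleB P) (stopT G r) x i :=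
      Sc_stop G r _ hxB (mem_nbrs.mpr hadj.symm)
    obtain ⟨m, hmlt, hms⟩ := exists_scanStep G r _ hsc
    refine ⟨m, hms, ?_⟩
    intro hcc
    exact hiB (Bn_mono G r _ (by omega) hcc)
  have h1 : sDeg G S i ≤ cfin G r (ruleB P) i := by
    rw [sDeg, cfin_eq]
    exact Set.ncard_le_ncard hsub (Set.toFinite _)
  have h2 : cfin G r (ruleB P) i ≤ P i := bwd_cnt_le G r P (stopT G r) i hiB
  omega

lemma bwd_cfin (P : Fin (n+1) → ℕ) (hP : IsParkingFunction G r P) (hPr : P r = 0) :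
    cfin G r (ruleB P) = P := by
  funext v
  by_cases hvr : v = r
  · rw [hvr, cfin_root, hPr]
  · obtain ⟨k, x, rest, js, hbs, _, _, _, hrule, _, _, _, _, hcnt⟩ :=
      burnStep_full G r (ruleB P) ⟨_, bwd_HB G r P hP v⟩ hvr
    have hklt : k < stopT G r := burnStep_lt_stop G r _ hbs
    have h1 : cfin G r (ruleB P) v = (runS G r (ruleB P) (k+1)).cnt v :=
      cnt_frozen G r _ (by omega) v hbs.2
    rw [h1, hcnt]
    exact hrule

end Backward

section Simulation
variable {n : ℕ} (G : SimpleGraph (Fin (n+1))) (r : Fin (n+1))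

lemma sim2 (T : RootedSpanningTree G r) :
    ∀ k, runS G r (ruleB (Phi G r T)) k = runS G r (ruleT G r T) k := by
  intro k
  induction k with
  | zero => rfl
  | succ k ih =>
    rw [runS_succ, runS_succ, ih]
    refine step_cases (ruleT G r T) (runS G r (ruleT G r T) k) _ ?_ ?_ ?_ ?_ ?_
    · intro h1 h2; rw [h2, step_nil h1]
    · intro i rest h1 h2 h3; rw [h3, step_pop h1 h2]
    · intro i rest j js h1 h2 hb h3; rw [h3, step_skip h1 h2 hb]
    · intro i rest j js h1 h2 hb hr h3
      have hbn : BurnStep G r (ruleT G r T) k j := by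
        refine ⟨hb, ?_⟩
        rw [Bn, runS_succ, h3]
        exact Finset.mem_insert_self _ _
      have hklt : k < stopT G r := burnStep_lt_stop G r _ hbn
      have hcnt1 : (runS G r (ruleT G r T) (k+1)).cnt j
          = (runS G r (ruleT G r T) k).cnt j := by
        rw [runS_succ, h3]
      have hrB : ruleB (Phi G r T) i j ((runS G r (ruleT G r T) k).cnt j) := by
        show (runS G r (ruleT G r T) k).cnt j = Phi G r T j
        have hfr : (runS G r (ruleT G r T) (stopT G r)).cnt j
            = (runS G r (ruleT G r T) (k+1)).cnt j :=
          cnt_frozen G r _ (by omega) j hbn.2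
        show _ = (runS G r (ruleT G r T) (stopT G r)).cnt j
        rw [hfr, hcnt1]
      rw [h3, step_burn h1 h2 hb hrB]
    · intro i rest j js h1 h2 hb hr h3
      have hklt : k < stopT G r :=
        lt_stop_of_stack G r _ (by rw [h1]; simp)
      have hcnt1 : (runS G r (ruleT G r T) (k+1)).cnt j
          = (runS G r (ruleT G r T) k).cnt j + 1 := by
        rw [runS_succ, h3]
        exact Function.update_self _ _ _
      have hle : (runS G r (ruleT G r T) k).cnt j + 1 ≤ Phi G r T j := by
        have h5 := cnt_mono G r (ruleT G r T) (show k+1 ≤ stopT G r by omega) j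
        rw [hcnt1] at h5
        exact h5
      have hrB : ¬ ruleB (Phi G r T) i j ((runS G r (ruleT G r T) k).cnt j) := by
        show ¬ ((runS G r (ruleT G r T) k).cnt j = Phi G r T j)
        omega
      rw [h3, step_cnt h1 h2 hb hrB]

lemma sim1 (P : Fin (n+1) → ℕ) (hP : IsParkingFunction G r P) :
    ∀ k, runS G r (ruleT G r (treeOf G r (ruleB P) (bwd_HB G r P hP))) k
      = runS G r (ruleB P) k := by
  set T := treeOf G r (ruleB P) (bwd_HB G r P hP) with hTdef
  have hTp : T.parent = pfin G r (ruleB P) := rfl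
  intro k
  induction k with
  | zero => rfl
  | succ k ih =>
    rw [runS_succ, runS_succ, ih]
    refine step_cases (ruleB P) (runS G r (ruleB P) k) _ ?_ ?_ ?_ ?_ ?_
    · intro h1 h2; rw [h2, step_nil h1]
    · intro i rest h1 h2 h3; rw [h3, step_pop h1 h2]
    · intro i rest j js h1 h2 hb h3; rw [h3, step_skip h1 h2 hb]
    · intro i rest j js h1 h2 hb hr h3
      have hbn : BurnStep G r (ruleB P) k j := by
        refine ⟨hb, ?_⟩
        rw [Bn, runS_succ, h3]
        exact Finset.mem_insert_self _ _
      have hklt : k < stopT G r := burnStep_lt_stop G r _ hbn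
      have hpar1 : (runS G r (ruleB P) (k+1)).par j = i := by
        rw [runS_succ, h3]
        exact Function.update_self _ _ _
      have hrT : ruleT G r T i j ((runS G r (ruleB P) k).cnt j) := by
        show T.parent j = i
        rw [hTp]
        rw [pfin, par_frozen G r _ (show k+1 ≤ stopT G r by omega) j hbn.2, hpar1]
      rw [h3, step_burn h1 h2 hb hrT]
    · intro i rest j js h1 h2 hb hr h3
      have hjr : j ≠ r := by
        intro hh
        exact hb (hh ▸ (inv_run G r (ruleB P) k).root_burnt)
      have hscan : ScanStep G r (ruleB P) k i j := by
        constructor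
        · rintro ⟨_, hc⟩
          exact hc (by rw [h2]; exact List.mem_cons_self)
        · refine ⟨((inv_run G r (ruleB P) k).todo_suffix i).subset
            (by rw [h2]; exact List.mem_cons_self), ?_⟩
          rw [runS_succ, h3]
          show j ∉ Function.update (runS G r (ruleB P) k).todo i js i
          rw [Function.update_self]
          have hnd : (j :: js).Nodup := by
            have := ((inv_run G r (ruleB P) k).todo_suffix i).sublist.nodup (nbrs_nodup i)
            rwa [h2] at this
          exact (List.nodup_cons.mp hnd).1
      have hrT : ¬ ruleT G r T i j ((runS G r (ruleB P) k).cnt j) := by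
        show ¬ (T.parent j = i)
        rw [hTp]
        intro hc
        have hbs := scan_pfin_burn G r (ruleB P) (bwd_HB G r P hP) hjr hscan hc.symm
        have : Bn G r (ruleB P) (k+1) j := hbs.2
        rw [Bn, runS_succ, h3] at this
        exact hb this
      rw [h3, step_cnt h1 h2 hb hrT]

lemma Phi_treeOf (P : Fin (n+1) → ℕ) (hP : IsParkingFunction G r P) (hPr : P r = 0) :
    Phi G r (treeOf G r (ruleB P) (bwd_HB G r P hP)) = P := by
  have h1 : cfin G r (ruleT G r (treeOf G r (ruleB P) (bwd_HB G r P hP)))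
      = cfin G r (ruleB P) := by
    show (runS G r _ (stopT G r)).cnt = (runS G r _ (stopT G r)).cnt
    rw [sim1 G r P hP]
  rw [Phi, h1, bwd_cfin G r P hP hPr]

lemma tree_ext {T1 T2 : RootedSpanningTree G r} (h : T1.parent = T2.parent) : T1 = T2 := by
  cases T1; cases T2
  dsimp at h
  subst h
  rfl

lemma Phi_inj : Function.Injective (Phi G r) := by
  intro T1 T2 h
  have e : runS G r (ruleT G r T1) (stopT G r) = runS G r (ruleT G r T2) (stopT G r) := by
    rw [← sim2 G r T1, h, sim2 G r T2]
  refine tree_ext G r ?_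
  rw [← fwd_pfin G r T1, ← fwd_pfin G r T2, pfin, pfin, e]

end Simulation
end PFGProof

/-- For each `d`, the number of parking functions of `G` of degree `d` equals
the number of spanning trees `T` of `G` rooted at `r` with `κ(G,T) = g - d`,
where `g = |E| - |V| + 1` (the κ-condition is stated additively). -/
theorem card_parking_functions_eq_card_trees {n : ℕ}
    (G : SimpleGraph (Fin (n+1))) (hG : G.Connected) (r : Fin (n+1)) (d : ℕ) :
    Set.ncard {P : Fin (n+1) → ℕ |
        P r = 0 ∧ PFG.IsParkingFunction G r P ∧ PFG.degPF r P = d} =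
      Set.ncard {T : PFG.RootedSpanningTree G r |
        PFG.kappaNum G r T.parent + d + (n + 1) = G.edgeSet.ncard + 1} := by
  classical
  have himg : {P : Fin (n+1) → ℕ |
      P r = 0 ∧ PFG.IsParkingFunction G r P ∧ PFG.degPF r P = d}
      = PFGProof.Phi G r '' {T : PFG.RootedSpanningTree G r |
        PFG.kappaNum G r T.parent + d + (n + 1) = G.edgeSet.ncard + 1} := by
    ext P
    constructor
    · rintro ⟨hPr, hP, hPd⟩
      refine ⟨PFGProof.treeOf G r (PFGProof.ruleB P) (PFGProof.bwd_HB G r P hP), ?_, ?_⟩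
      · show PFG.kappaNum G r _ + d + (n+1) = G.edgeSet.ncard + 1
        have hid := PFGProof.Phi_identity G r
          (PFGProof.treeOf G r (PFGProof.ruleB P) (PFGProof.bwd_HB G r P hP))
        rw [PFGProof.Phi_treeOf G r P hP hPr, hPd] at hid
        exact hid
      · exact PFGProof.Phi_treeOf G r P hP hPr
    · rintro ⟨T, hT, rfl⟩
      have hid := PFGProof.Phi_identity G r T
      have hT' : PFG.kappaNum G r T.parent + d + (n + 1) = G.edgeSet.ncard + 1 := hT
      refine ⟨PFGProof.Phi_root G r T, PFGProof.Phi_parking G r T, ?_⟩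
      omega
  rw [himg]
  exact Set.ncard_image_of_injOn ((PFGProof.Phi_inj G r).injOn)
end

section
/- For any connected threshold graph G labeled by reverse degree sequence and any spanning tree T of G rooted at vertex 0, every inversion of T is a κ-inversion. -/
open Finset

namespace PFG

/-- `G` is a threshold graph: it can be built from a single vertex by
successively adding dominating vertices (adjacent to every earlier vertex) or
isolated vertices (adjacent to no earlier vertex).  Here `e` enumerates the
vertices in order of addition, and `b k = true` iff the `k`-th vertex was
added as a dominating vertex. -/
def IsThresholdGraph {V : Type*} (G : SimpleGraph V) : Prop :=
  ∃ (m : ℕ) (e : Fin m ≃ V) (b : Fin m → Bool),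
    ∀ i j : Fin m, i < j → (G.Adj (e i) (e j) ↔ b j = true)

/-- The degree of a vertex. -/
noncomputable def vdeg {V : Type*} (G : SimpleGraph V) (v : V) : ℕ :=
  Set.ncard {w | G.Adj v w}

end PFG

namespace PFG

/-- In a threshold graph, adjacency of distinct vertices is decided by the
dominating-flag of the later-added one. -/
lemma threshold_adj_iff {V : Type*} {G : SimpleGraph V} {m : ℕ} (e : Fin m ≃ V)
    (b : Fin m → Bool) (hb : ∀ i j : Fin m, i < j → (G.Adj (e i) (e j) ↔ b j = true))
    {x y : V} (hxy : x ≠ y) :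
    (G.Adj x y ↔ b (e.symm x ⊔ e.symm y) = true) := by
  have hne : e.symm x ≠ e.symm y := fun h => hxy (e.symm.injective h)
  rcases lt_or_gt_of_ne hne with h | h
  · have := hb _ _ h
    simp only [Equiv.apply_symm_apply] at this
    rwa [sup_eq_right.mpr h.le]
  · have := hb _ _ h
    simp only [Equiv.apply_symm_apply] at this
    rw [sup_eq_left.mpr h.le]
    constructor
    · intro hadj; exact this.mp hadj.symm
    · intro hbt; exact (this.mpr hbt).symm

/-- No alternating pair in a threshold graph. -/
lemma threshold_no_alt {V : Type*} {G : SimpleGraph V} (hthr : IsThresholdGraph G)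
    {u v z w : V} (huz : G.Adj u z) (hvw : G.Adj v w)
    (huw : ¬ G.Adj u w) (hvz : ¬ G.Adj v z) (huw' : u ≠ w) (hvz' : v ≠ z) : False := by
  obtain ⟨m, e, b, hb⟩ := hthr
  set iu := e.symm u; set iv := e.symm v; set iz := e.symm z; set iw := e.symm w
  have h1 : b (iu ⊔ iz) = true := (threshold_adj_iff e b hb huz.ne).mp huz
  have h2 : b (iv ⊔ iw) = true := (threshold_adj_iff e b hb hvw.ne).mp hvw
  have h3 : b (iu ⊔ iw) ≠ true := fun h => huw ((threshold_adj_iff e b hb huw').mpr h)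
  have h4 : b (iv ⊔ iz) ≠ true := fun h => hvz ((threshold_adj_iff e b hb hvz').mpr h)
  have key : (iu ⊔ iz) ⊔ (iv ⊔ iw) = (iu ⊔ iw) ⊔ (iv ⊔ iz) := by
    ac_rfl
  have hT : b ((iu ⊔ iz) ⊔ (iv ⊔ iw)) = true := by
    rcases le_total (iu ⊔ iz) (iv ⊔ iw) with h | h
    · rw [sup_eq_right.mpr h]; exact h2
    · rw [sup_eq_left.mpr h]; exact h1
  have hF : b ((iu ⊔ iw) ⊔ (iv ⊔ iz)) ≠ true := by
    rcases le_total (iu ⊔ iw) (iv ⊔ iz) with h | h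
    · rw [sup_eq_right.mpr h]; exact h4
    · rw [sup_eq_left.mpr h]; exact h3
  rw [key] at hT
  exact hF hT

/-- Core lemma: in a threshold graph labeled by reverse degree sequence,
neighborhoods are nested downward. -/
lemma threshold_adj_down {n : ℕ} {G : SimpleGraph (Fin (n+1))}
    (hthr : IsThresholdGraph G)
    (hlab : ∀ i j : Fin (n+1), i ≤ j → PFG.vdeg G j ≤ PFG.vdeg G i)
    {a c b : Fin (n+1)} (hab : G.Adj a b) (hcb : c < b) (hca : c ≠ a) :
    G.Adj a c := by
  by_contra hac
  set Nb : Set (Fin (n+1)) := {w | G.Adj b w} with hNb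
  set Nc : Set (Fin (n+1)) := {w | G.Adj c w} with hNc
  have hdeg : Nb.ncard ≤ Nc.ncard := by have := hlab c b hcb.le; simpa [PFG.vdeg, hNb, hNc] using this
  have haNb : a ∈ Nb := hab.symm
  have haNc : a ∉ Nc := fun h => hac (G.adj_symm h)
  by_cases hw : ∃ w, w ∈ Nc ∧ w ∉ Nb ∧ w ≠ b
  · obtain ⟨w, hwNc, hwNb, hwb⟩ := hw
    -- alternating: edges b–a, c–w ; non-edges b–w, c–a
    exact threshold_no_alt hthr hab.symm hwNc (hwNb) (fun h => hac h.symm)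
      hwb.symm hca
  · push_neg at hw
    -- Nc \ {b} ⊆ Nb \ {a}
    have hsub : Nc \ {b} ⊆ Nb \ {a} := by
      rintro w ⟨hwNc, hwb⟩
      have hwb' : w ≠ b := by simpa using hwb
      refine ⟨?_, ?_⟩
      · by_contra hnb; exact hwb' (hw w hwNc hnb)
      · simp only [Set.mem_singleton_iff]
        rintro rfl; exact haNc hwNc
    have hNbfin : Nb.Finite := Set.toFinite _
    have hNcfin : Nc.Finite := Set.toFinite _
    have h1 : (Nb \ {a}).ncard = Nb.ncard - 1 := Set.ncard_diff_singleton_of_mem haNb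
    have h2 : Nc.ncard ≤ (Nc \ {b}).ncard + 1 := by
      have : Nc ⊆ (Nc \ {b}) ∪ {b} := by
        intro w hwin
        by_cases hwb : w = b
        · right; simp [hwb]
        · left; exact ⟨hwin, by simpa using hwb⟩
      calc Nc.ncard ≤ ((Nc \ {b}) ∪ {b}).ncard :=
            Set.ncard_le_ncard this ((hNcfin.diff.union (Set.finite_singleton b)))
        _ ≤ (Nc \ {b}).ncard + ({b} : Set (Fin (n+1))).ncard := Set.ncard_union_le _ _
        _ = (Nc \ {b}).ncard + 1 := by rw [Set.ncard_singleton]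
    have hNbpos : 0 < Nb.ncard := (Set.ncard_pos hNbfin).mpr ⟨a, haNb⟩
    have hle : (Nb \ {a}).ncard ≤ (Nc \ {b}).ncard := by omega
    have heq : Nc \ {b} = Nb \ {a} :=
      Set.eq_of_subset_of_ncard_le hsub hle hNbfin.diff
    -- show b ∈ Nc
    have hbNc : b ∈ Nc := by
      by_contra hbNc
      have : Nc \ {b} = Nc := by
        apply Set.diff_singleton_eq_self hbNc
      rw [this] at heq
      have : Nc.ncard = Nb.ncard - 1 := by rw [heq, h1]
      omega
    have hcNb : c ∈ Nb := G.adj_symm hbNc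
    have : c ∈ Nc \ {b} := heq ▸ ⟨hcNb, by simpa using hca⟩
    exact G.irrefl this.1

end PFG

/-- In a connected threshold graph labeled by reverse degree sequence, every
inversion of a spanning tree rooted at `0` is a κ-inversion. -/
theorem threshold_inversion_is_kappa_inversion {n : ℕ}
    (G : SimpleGraph (Fin (n+1))) (hG : G.Connected)
    (hthr : PFG.IsThresholdGraph G)
    (hlab : ∀ i j : Fin (n+1), i ≤ j → PFG.vdeg G j ≤ PFG.vdeg G i)
    (T : PFG.RootedSpanningTree G 0) (i j : Fin (n+1))
    (hinv : PFG.IsInversion T.parent i j) :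
    PFG.IsKappaInversion G 0 T.parent i j := by
  obtain ⟨⟨k, hk, hkj⟩, hji⟩ := hinv
  have hi0 : i ≠ 0 := by
    intro h
    rw [h] at hji
    exact absurd hji (by simp)
  have hjp : j ≠ T.parent i := by
    intro h
    have hcyc : T.parent^[k+1] i = i := by
      rw [Function.iterate_succ_apply, ← h, hkj]
    obtain ⟨K, hK⟩ := T.reaches_root i
    have h0 : ∀ q, T.parent^[q] (0 : Fin (n+1)) = 0 := fun q =>
      Function.iterate_fixed T.parent_root q
    have h1 : T.parent^[(k+1)*K] i = i := by
      rw [Function.iterate_mul]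
      exact Function.iterate_fixed hcyc K
    have h2 : T.parent^[k*K + K] i = 0 := by
      rw [Function.iterate_add_apply, hK]
      exact h0 _
    have h3 : (k+1)*K = k*K + K := by ring
    rw [h3, h2] at h1
    exact hi0 h1.symm
  exact ⟨⟨k, hk, hkj⟩, hji, hi0,
    PFG.threshold_adj_down hthr hlab (T.adj_parent i hi0) hji hjp⟩
end

section
/- Let n ≥ 1 and consider the complete graph K_{n+1} on vertices {0,...,n} with root 0. A function P : {1,...,n} → ℕ is a parking function for K_{n+1} if and only if, when the values P(1),...,P(n) are sorted into nondecreasing order b_1 ≤ b_2 ≤ ... ≤ b_n, we have b_i ≤ i - 1 for all i. -/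
open Finset

section Aux

open Finset

variable {n : ℕ}

lemma sDeg_top_of_mem (S : Finset (Fin (n+1))) {v : Fin (n+1)} (hv : v ∈ S) :
    PFG.sDeg (⊤ : SimpleGraph (Fin (n+1))) S v = (n+1) - S.card := by
  unfold PFG.sDeg
  have hset : {j : Fin (n+1) | (⊤ : SimpleGraph (Fin (n+1))).Adj v j ∧ j ∉ S} = ↑(Sᶜ) := by
    ext j
    simp only [SimpleGraph.top_adj, Set.mem_setOf_eq, Finset.coe_compl, Set.mem_compl_iff,
      Finset.mem_coe]
    exact ⟨fun h => h.2, fun hj => ⟨fun h => hj (h ▸ hv), hj⟩⟩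
  rw [hset, Set.ncard_coe_finset, Finset.card_compl, Fintype.card_fin]

lemma countP_le_of_sorted_get_lt {L : List ℕ} (hL : L.Pairwise (· ≤ ·)) {i : ℕ}
    (h : i < L.length) {t : ℕ} (ht : L.get ⟨i, h⟩ < t) :
    L.countP (fun x => t ≤ x) ≤ L.length - (i + 1) := by
  have h1 : (L.take (i+1)).countP (fun x => t ≤ x) = 0 := by
    rw [List.countP_eq_zero]
    intro x hx
    obtain ⟨j, hj, rfl⟩ := List.getElem_of_mem hx
    have hj' : j < L.length := lt_of_lt_of_le hj (by simp [List.length_take])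
    have hji : j ≤ i := by
      have := hj; simp [List.length_take] at this; omega
    have hle : L[j] ≤ L.get ⟨i, h⟩ :=
      hL.rel_get_of_le (a := ⟨j, hj'⟩) (b := ⟨i, h⟩) hji
    rw [List.getElem_take]
    simp only [decide_eq_true_eq]
    omega
  have h2 : (L.drop (i+1)).countP (fun x => t ≤ x) ≤ (L.drop (i+1)).length :=
    List.countP_le_length
  calc L.countP (fun x => t ≤ x)
      = (L.take (i+1)).countP (fun x => t ≤ x) + (L.drop (i+1)).countP (fun x => t ≤ x) := by
        conv_lhs => rw [← List.take_append_drop (i+1) L]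
        rw [List.countP_append]
    _ ≤ 0 + (L.drop (i+1)).length := by omega
    _ = L.length - (i+1) := by simp [List.length_drop]

lemma le_countP_of_sorted_le_get {L : List ℕ} (hL : L.Pairwise (· ≤ ·)) {i : ℕ}
    (h : i < L.length) {t : ℕ} (ht : t ≤ L.get ⟨i, h⟩) :
    L.length - i ≤ L.countP (fun x => t ≤ x) := by
  have h1 : (L.drop i).countP (fun x => t ≤ x) = (L.drop i).length := by
    rw [List.countP_eq_length]
    intro x hx
    obtain ⟨j, hj, rfl⟩ := List.getElem_of_mem hx
    rw [List.getElem_drop]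
    have hij : i + j < L.length := by simp [List.length_drop] at hj; omega
    have hle : L.get ⟨i, h⟩ ≤ L[i+j] :=
      hL.rel_get_of_le (a := ⟨i, h⟩) (b := ⟨i+j, hij⟩) (by simp)
    simp only [decide_eq_true_eq]
    omega
  calc L.length - i = (L.drop i).length := by simp [List.length_drop]
    _ = (L.drop i).countP (fun x => t ≤ x) := h1.symm
    _ ≤ L.countP (fun x => t ≤ x) := by
        conv_rhs => rw [← List.take_append_drop i L]
        rw [List.countP_append]; omega

end Aux
/-- Classical characterization: `P` is a parking function for the complete
graph `K_{n+1}` on `{0,…,n}` with root `0` iff, when its values on `{1,…,n}`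
are sorted into nondecreasing order `b₁ ≤ … ≤ b_n`, we have `bᵢ ≤ i - 1`. -/
theorem complete_parking_function_iff_sorted {n : ℕ} (hn : 1 ≤ n)
    (P : Fin (n+1) → ℕ) :
    PFG.IsParkingFunction (⊤ : SimpleGraph (Fin (n+1))) 0 P ↔
      ∀ (i : ℕ)
        (h : i < (Multiset.sort
          (((Finset.univ.erase (0 : Fin (n+1))).val).map P) (· ≤ ·)).length),
        (Multiset.sort
          (((Finset.univ.erase (0 : Fin (n+1))).val).map P) (· ≤ ·)).get ⟨i, h⟩ ≤ i := by
  classical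
  set L : List ℕ := Multiset.sort
      (((Finset.univ.erase (0 : Fin (n+1))).val).map P) (· ≤ ·) with hLdef
  have hsorted : L.Pairwise (· ≤ ·) := Multiset.pairwise_sort _ _
  have hlen : L.length = n := by
    rw [hLdef, Multiset.length_sort, Multiset.card_map]
    simp [Finset.card_erase_of_mem]
  have key : ∀ t : ℕ, L.countP (fun x => t ≤ x)
      = ((Finset.univ.erase (0 : Fin (n+1))).filter (fun v => t ≤ P v)).card := by
    intro t
    rw [hLdef, ← Multiset.coe_countP (p := fun x => t ≤ x), Multiset.sort_eq,
      Multiset.countP_map]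
    rfl
  constructor
  · intro hP i h
    by_contra hbi
    push_neg at hbi
    set S : Finset (Fin (n+1)) :=
      (Finset.univ.erase (0 : Fin (n+1))).filter (fun v => i+1 ≤ P v) with hSdef
    have hin : i < n := hlen ▸ h
    have hcard : n - i ≤ S.card := by
      rw [← key (i+1)]
      have := le_countP_of_sorted_le_get hsorted h (t := i+1) hbi
      omega
    have hSne : S.Nonempty := Finset.card_pos.1 (by omega)
    have h0S : (0 : Fin (n+1)) ∉ S := fun hx =>
      Finset.notMem_erase _ _ (Finset.mem_filter.1 hx).1
    obtain ⟨v, hvS, hv⟩ := hP S hSne h0S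
    rw [sDeg_top_of_mem S hvS] at hv
    have hPv : i+1 ≤ P v := (Finset.mem_filter.1 hvS).2
    omega
  · intro hb S hSne h0S
    by_contra hno
    push_neg at hno
    have hs1 : 1 ≤ S.card := Finset.card_pos.2 hSne
    have hSsub : S ⊆ Finset.univ.erase (0 : Fin (n+1)) := fun v hv =>
      Finset.mem_erase.2 ⟨fun h => h0S (h ▸ hv), Finset.mem_univ v⟩
    have hsn : S.card ≤ n := le_trans (Finset.card_le_card hSsub) (by simp)
    have hsub2 : S ⊆ (Finset.univ.erase (0 : Fin (n+1))).filter
        (fun v => n+1-S.card ≤ P v) := by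
      intro v hv
      refine Finset.mem_filter.2 ⟨hSsub hv, ?_⟩
      have := hno v hv
      rwa [sDeg_top_of_mem S hv] at this
    have hcount2 : S.card ≤ L.countP (fun x => n+1-S.card ≤ x) := by
      rw [key]; exact Finset.card_le_card hsub2
    have hi : n - S.card < L.length := by omega
    have hget : L.get ⟨n - S.card, hi⟩ ≤ n - S.card := hb (n - S.card) hi
    have hlast := countP_le_of_sorted_get_lt hsorted hi (t := n+1-S.card)
      (lt_of_le_of_lt hget (by omega))
    omega
end
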